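/- arXiv:2503.23651 — 5 statements merged into one kernel-verified Lean document; each statement's English description precedes it below -/
import Mathlib

section
/- Let f : I_m × I_n → X be a simplicial map. For any r, s ≥ 0, any 0 ≤ i, k ≤ m and any 0 ≤ j, l ≤ n, the compositions f ∘ (α_i^r × α_j^s) and f ∘ (α_k^r × α_l^s), both maps I_{m+r} × I_{n+s} → X, are contiguity equivalent. -/
structure ASC (V : Type) where
  faces : Set (Finset V)
  down_closed : ∀ ⦃s t : Finset V⦄, s ∈ faces → t ⊆ s → t ∈ faces

variable {U V W : Type}

/-- A vertex map is a simplicial map if it sends every simplex to a simplex. -/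
def IsSimplicialMap [DecidableEq W] (K : ASC V) (L : ASC W) (f : V → W) : Prop :=
  ∀ s ∈ K.faces, s.image f ∈ L.faces

/-- Two maps are contiguous if `f(σ) ∪ g(σ)` is a simplex for every simplex `σ`. -/
def Contiguous [DecidableEq W] (K : ASC V) (L : ASC W) (f g : V → W) : Prop :=
  ∀ s ∈ K.faces, s.image f ∪ s.image g ∈ L.faces

/-- Contiguity equivalence: a finite chain of contiguities through simplicial maps. -/
def ContigEquiv [DecidableEq W] (K : ASC V) (L : ASC W) : (V → W) → (V → W) → Prop :=
  Relation.ReflTransGen (fun a b =>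
    IsSimplicialMap K L a ∧ IsSimplicialMap K L b ∧ Contiguous K L a b)

/-- The categorical product of simplicial complexes. -/
def ASC.prod [DecidableEq V] [DecidableEq W] (K : ASC V) (L : ASC W) : ASC (V × W) where
  faces := {s | s.image Prod.fst ∈ K.faces ∧ s.image Prod.snd ∈ L.faces}
  down_closed := fun _s _t hs hts =>
    ⟨K.down_closed hs.1 (Finset.image_subset_image hts),
     L.down_closed hs.2 (Finset.image_subset_image hts)⟩

/-- The simplicial interval `I_m` on vertices `0, …, m`. -/
def interval (m : ℕ) : ASC ℕ where
  faces := {s | (∀ x ∈ s, x ≤ m) ∧ ∀ x ∈ s, ∀ y ∈ s, x ≤ y + 1}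
  down_closed := fun _s _t hs hts =>
    ⟨fun x hx => hs.1 x (hts hx), fun x hx y hy => hs.2 x (hts hx) y (hts hy)⟩

/-- The vertex map of `α_i : I_{m+1} → I_m`. -/
def alpha (i : ℕ) : ℕ → ℕ := fun s => if s ≤ i then s else s - 1

/-- The categorical product `I_m × I_n`. -/
def prodInterval (m n : ℕ) : ASC (ℕ × ℕ) := (interval m).prod (interval n)

/-- A face sphere: a simplicial map `(I_m × I_n, ∂(I_m × I_n)) → (X, x₀)`. -/
def IsFaceSphere [DecidableEq V] (X : ASC V) (x₀ : V) (m n : ℕ) (f : ℕ × ℕ → V) : Prop :=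
  IsSimplicialMap (prodInterval m n) X f ∧
  ∀ p : ℕ × ℕ, p.1 ≤ m → p.2 ≤ n →
    (p.1 = 0 ∨ p.1 = m ∨ p.2 = 0 ∨ p.2 = n) → f p = x₀

/-- Contiguity equivalence of face spheres, relative the boundary. -/
def FaceContigEquiv [DecidableEq V] (X : ASC V) (x₀ : V) (m n : ℕ) :
    (ℕ × ℕ → V) → (ℕ × ℕ → V) → Prop :=
  Relation.ReflTransGen (fun a b =>
    IsFaceSphere X x₀ m n a ∧ IsFaceSphere X x₀ m n b ∧
      Contiguous (prodInterval m n) X a b)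

/-- The trivial extension `f ∘ (α_m^r × α_n^s)`. -/
def trivExt (m n r s : ℕ) (f : ℕ × ℕ → V) : ℕ × ℕ → V :=
  f ∘ Prod.map ((alpha m)^[r]) ((alpha n)^[s])

/-- Extension-contiguity equivalence of face spheres of possibly different sizes. -/
def ExtContigEquiv [DecidableEq V] (X : ASC V) (x₀ : V) (m n : ℕ) (f : ℕ × ℕ → V)
    (m' n' : ℕ) (g : ℕ × ℕ → V) : Prop :=
  ∃ M N, m ≤ M ∧ m' ≤ M ∧ n ≤ N ∧ n' ≤ N ∧
    FaceContigEquiv X x₀ M N (trivExt m n (M - m) (N - n) f)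
      (trivExt m' n' (M - m') (N - n') g)

/-- The product `f · g` of face spheres: `f` in the lower-left block,
a translate of `g` in the upper-right block, basepoint elsewhere. -/
def fsMul (x₀ : V) (m n : ℕ) (f g : ℕ × ℕ → V) : ℕ × ℕ → V := fun p =>
  if p.1 ≤ m ∧ p.2 ≤ n then f p
  else if m + 1 ≤ p.1 ∧ n + 1 ≤ p.2 then g (p.1 - (m + 1), p.2 - (n + 1))
  else x₀

section DoublingAux

variable {V : Type} [DecidableEq V]

lemma alpha_iter (i r x : ℕ) :
    (alpha i)^[r] x = if x ≤ i then x else max i (x - r) := by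
  induction r generalizing x with
  | zero => simp only [Function.iterate_zero, id_eq]; split_ifs <;> omega
  | succ r ih =>
      rw [Function.iterate_succ_apply, ih]
      simp only [alpha]
      split_ifs <;> omega

lemma alphaIter_simplicial {m : ℕ} (r : ℕ) {i : ℕ} (hi : i ≤ m) :
    IsSimplicialMap (interval (m + r)) (interval m) ((alpha i)^[r]) := by
  rintro t ⟨h1, h2⟩
  constructor
  · intro x hx
    rw [Finset.mem_image] at hx
    obtain ⟨y, hy, rfl⟩ := hx
    have := h1 y hy
    rw [alpha_iter]; split_ifs <;> omega
  · intro x hx y hy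
    rw [Finset.mem_image] at hx hy
    obtain ⟨a, ha, rfl⟩ := hx
    obtain ⟨b, hb, rfl⟩ := hy
    have := h2 a ha b hb
    rw [alpha_iter, alpha_iter]; split_ifs <;> omega

lemma alphaIter_contig {m : ℕ} (r : ℕ) {i : ℕ} (hi : i + 1 ≤ m) :
    Contiguous (interval (m + r)) (interval m) ((alpha i)^[r]) ((alpha (i + 1))^[r]) := by
  rintro t ⟨h1, h2⟩
  constructor
  · intro x hx
    rw [Finset.mem_union, Finset.mem_image, Finset.mem_image] at hx
    rcases hx with ⟨y, hy, rfl⟩ | ⟨y, hy, rfl⟩ <;>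
      · have := h1 y hy
        rw [alpha_iter]; split_ifs <;> omega
  · intro x hx y hy
    rw [Finset.mem_union, Finset.mem_image, Finset.mem_image] at hx hy
    rcases hx with ⟨a, ha, rfl⟩ | ⟨a, ha, rfl⟩ <;>
      rcases hy with ⟨b, hb, rfl⟩ | ⟨b, hb, rfl⟩ <;>
        · have := h2 a ha b hb
          rw [alpha_iter, alpha_iter]; split_ifs <;> omega

lemma contig_self {K : ASC ℕ} {L : ASC ℕ} {g : ℕ → ℕ}
    (hg : IsSimplicialMap K L g) : Contiguous K L g g := by
  intro t ht
  rw [Finset.union_self]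
  exact hg t ht

lemma prod_map_simplicial {m n M N : ℕ} {g h : ℕ → ℕ} {X : ASC V} {f : ℕ × ℕ → V}
    (hg : IsSimplicialMap (interval M) (interval m) g)
    (hh : IsSimplicialMap (interval N) (interval n) h)
    (hf : IsSimplicialMap (prodInterval m n) X f) :
    IsSimplicialMap (prodInterval M N) X (f ∘ Prod.map g h) := by
  rintro t ⟨h1, h2⟩
  have e : t.image (f ∘ Prod.map g h) = (t.image (Prod.map g h)).image f := by
    rw [Finset.image_image]
  rw [e]
  apply hf
  constructor
  · have e1 : (t.image (Prod.map g h)).image Prod.fst = (t.image Prod.fst).image g := by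
      rw [Finset.image_image, Finset.image_image]; rfl
    rw [e1]; exact hg _ h1
  · have e2 : (t.image (Prod.map g h)).image Prod.snd = (t.image Prod.snd).image h := by
      rw [Finset.image_image, Finset.image_image]; rfl
    rw [e2]; exact hh _ h2

lemma prod_map_contig {m n M N : ℕ} {g g' h h' : ℕ → ℕ} {X : ASC V} {f : ℕ × ℕ → V}
    (hgg : Contiguous (interval M) (interval m) g g')
    (hhh : Contiguous (interval N) (interval n) h h')
    (hf : IsSimplicialMap (prodInterval m n) X f) :
    Contiguous (prodInterval M N) X (f ∘ Prod.map g h) (f ∘ Prod.map g' h') := by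
  rintro t ⟨h1, h2⟩
  have e : t.image (f ∘ Prod.map g h) ∪ t.image (f ∘ Prod.map g' h')
      = (t.image (Prod.map g h) ∪ t.image (Prod.map g' h')).image f := by
    rw [Finset.image_union, Finset.image_image, Finset.image_image]
  rw [e]
  apply hf
  constructor
  · have e1 : (t.image (Prod.map g h) ∪ t.image (Prod.map g' h')).image Prod.fst
        = (t.image Prod.fst).image g ∪ (t.image Prod.fst).image g' := by
      rw [Finset.image_union, Finset.image_image, Finset.image_image,
        Finset.image_image, Finset.image_image]
      rfl
    rw [e1]; exact hgg _ h1
  · have e2 : (t.image (Prod.map g h) ∪ t.image (Prod.map g' h')).image Prod.snd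
        = (t.image Prod.snd).image h ∪ (t.image Prod.snd).image h' := by
      rw [Finset.image_union, Finset.image_image, Finset.image_image,
        Finset.image_image, Finset.image_image]
      rfl
    rw [e2]; exact hhh _ h2

lemma contigEquiv_symm {U W : Type} [DecidableEq W] {K : ASC U} {L : ASC W}
    {a b : U → W} (h : ContigEquiv K L a b) : ContigEquiv K L b a := by
  refine @Std.Symm.symm _ _ (@Relation.ReflTransGen.stdSymm _ _ ⟨?_⟩) _ _ h
  rintro p q ⟨hp, hq, hpq⟩
  refine ⟨hq, hp, fun t ht => ?_⟩
  rw [Finset.union_comm]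
  exact hpq t ht

section Chains

variable {X : ASC V} {m n r s : ℕ} {f : ℕ × ℕ → V}
  (hf : IsSimplicialMap (prodInterval m n) X f)

include hf

lemma chain_fst (i d j : ℕ) (h : i + d ≤ m) (hj : j ≤ n) :
    ContigEquiv (prodInterval (m + r) (n + s)) X
      (f ∘ Prod.map ((alpha i)^[r]) ((alpha j)^[s]))
      (f ∘ Prod.map ((alpha (i + d))^[r]) ((alpha j)^[s])) := by
  induction d with
  | zero => exact Relation.ReflTransGen.refl
  | succ d ih =>
      refine (ih (by omega)).trans (Relation.ReflTransGen.single ?_)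
      have hs1 := alphaIter_simplicial (m := m) r (i := i + d) (by omega)
      have hs2 := alphaIter_simplicial (m := m) r (i := i + d + 1) (by omega)
      have hsj := alphaIter_simplicial (m := n) s (i := j) hj
      refine ⟨prod_map_simplicial hs1 hsj hf, ?_, ?_⟩
      · rw [show i + (d + 1) = i + d + 1 from rfl]
        exact prod_map_simplicial hs2 hsj hf
      · exact prod_map_contig (alphaIter_contig r (by omega)) (contig_self hsj) hf

lemma chain_snd (i j d : ℕ) (hi : i ≤ m) (h : j + d ≤ n) :
    ContigEquiv (prodInterval (m + r) (n + s)) X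
      (f ∘ Prod.map ((alpha i)^[r]) ((alpha j)^[s]))
      (f ∘ Prod.map ((alpha i)^[r]) ((alpha (j + d))^[s])) := by
  induction d with
  | zero => exact Relation.ReflTransGen.refl
  | succ d ih =>
      refine (ih (by omega)).trans (Relation.ReflTransGen.single ?_)
      have hs1 := alphaIter_simplicial (m := n) s (i := j + d) (by omega)
      have hs2 := alphaIter_simplicial (m := n) s (i := j + d + 1) (by omega)
      have hsi := alphaIter_simplicial (m := m) r (i := i) hi
      refine ⟨prod_map_simplicial hsi hs1 hf, ?_, ?_⟩
      · rw [show j + (d + 1) = j + d + 1 from rfl]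
        exact prod_map_simplicial hsi hs2 hf
      · exact prod_map_contig (contig_self hsi) (alphaIter_contig s (by omega)) hf

lemma chain_fst' (i k j : ℕ) (hi : i ≤ m) (hk : k ≤ m) (hj : j ≤ n) :
    ContigEquiv (prodInterval (m + r) (n + s)) X
      (f ∘ Prod.map ((alpha i)^[r]) ((alpha j)^[s]))
      (f ∘ Prod.map ((alpha k)^[r]) ((alpha j)^[s])) := by
  rcases le_total i k with h | h
  · have := chain_fst (r := r) (s := s) hf i (k - i) j (by omega) hj
    rwa [show i + (k - i) = k from by omega] at this
  · have := chain_fst (r := r) (s := s) hf k (i - k) j (by omega) hj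
    rw [show k + (i - k) = i from by omega] at this
    exact contigEquiv_symm this

lemma chain_snd' (i j l : ℕ) (hi : i ≤ m) (hj : j ≤ n) (hl : l ≤ n) :
    ContigEquiv (prodInterval (m + r) (n + s)) X
      (f ∘ Prod.map ((alpha i)^[r]) ((alpha j)^[s]))
      (f ∘ Prod.map ((alpha i)^[r]) ((alpha l)^[s])) := by
  rcases le_total j l with h | h
  · have := chain_snd (r := r) (s := s) hf i j (l - j) hi (by omega)
    rwa [show j + (l - j) = l from by omega] at this
  · have := chain_snd (r := r) (s := s) hf i l (j - l) hi (by omega)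
    rw [show l + (j - l) = j from by omega] at this
    exact contigEquiv_symm this

end Chains

end DoublingAux

/-- repeating different columns/rows the same number of times gives
contiguity equivalent maps. -/
theorem doubling_contigEquiv {V : Type} [DecidableEq V]
    (X : ASC V) (m n r s i j k l : ℕ) (f : ℕ × ℕ → V)
    (hf : IsSimplicialMap (prodInterval m n) X f)
    (hi : i ≤ m) (hk : k ≤ m) (hj : j ≤ n) (hl : l ≤ n) :
    ContigEquiv (prodInterval (m + r) (n + s)) X
      (f ∘ Prod.map ((alpha i)^[r]) ((alpha j)^[s]))
      (f ∘ Prod.map ((alpha k)^[r]) ((alpha l)^[s])) := by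
  exact (chain_fst' hf i k j hi hk hj).trans (chain_snd' hf k j l hk hj hl)
end

section
/- The product operation on face spheres is well-defined on extension-contiguity equivalence classes: if f₁ ≈ f₂ and g₁ ≈ g₂ are extension-contiguity equivalent face spheres in (X, x₀), then f₁·g₁ ≈ f₂·g₂. -/
variable {U V W : Type}

namespace FSAux

variable {V : Type} [DecidableEq V]

lemma face_bounds {M N : ℕ} {s : Finset (ℕ × ℕ)}
    (hs : s ∈ (prodInterval M N).faces) : ∀ p ∈ s, p.1 ≤ M ∧ p.2 ≤ N := by
  intro p hp
  obtain ⟨h1, h2⟩ := hs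
  exact ⟨h1.1 p.1 (Finset.mem_image_of_mem _ hp), h2.1 p.2 (Finset.mem_image_of_mem _ hp)⟩

lemma face_step {M N : ℕ} {s : Finset (ℕ × ℕ)}
    (hs : s ∈ (prodInterval M N).faces) :
    ∀ p ∈ s, ∀ q ∈ s, p.1 ≤ q.1 + 1 ∧ p.2 ≤ q.2 + 1 := by
  intro p hp q hq
  obtain ⟨h1, h2⟩ := hs
  exact ⟨h1.2 p.1 (Finset.mem_image_of_mem _ hp) q.1 (Finset.mem_image_of_mem _ hq),
    h2.2 p.2 (Finset.mem_image_of_mem _ hp) q.2 (Finset.mem_image_of_mem _ hq)⟩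

/-- Agreement on the grid. -/
def GridEq (M N : ℕ) (a b : ℕ × ℕ → V) : Prop :=
  ∀ p : ℕ × ℕ, p.1 ≤ M → p.2 ≤ N → a p = b p

lemma GridEq.image_eq {M N : ℕ} {a b : ℕ × ℕ → V} (h : GridEq M N a b)
    {s : Finset (ℕ × ℕ)} (hs : s ∈ (prodInterval M N).faces) :
    s.image a = s.image b :=
  Finset.image_congr fun p hp => h p (face_bounds hs p hp).1 (face_bounds hs p hp).2

lemma GridEq.isFaceSphere {X : ASC V} {x₀ : V} {M N : ℕ} {a b : ℕ × ℕ → V}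
    (h : GridEq M N a b) (ha : IsFaceSphere X x₀ M N a) : IsFaceSphere X x₀ M N b := by
  constructor
  · intro s hs
    rw [← h.image_eq hs]
    exact ha.1 s hs
  · intro p h1 h2 h3
    rw [← h p h1 h2]
    exact ha.2 p h1 h2 h3

lemma GridEq.faceContigEquiv {X : ASC V} {x₀ : V} {M N : ℕ} {a b : ℕ × ℕ → V}
    (h : GridEq M N a b) (ha : IsFaceSphere X x₀ M N a) :
    FaceContigEquiv X x₀ M N a b := by
  refine Relation.ReflTransGen.single ⟨ha, h.isFaceSphere ha, ?_⟩
  intro s hs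
  rw [h.image_eq hs, Finset.union_self]
  exact (h.isFaceSphere ha).1 s hs

lemma contiguous_symm {X : ASC V} {M N : ℕ} {a b : ℕ × ℕ → V}
    (h : Contiguous (prodInterval M N) X a b) : Contiguous (prodInterval M N) X b a := by
  intro s hs; rw [Finset.union_comm]; exact h s hs

lemma faceContigEquiv_symm {X : ASC V} {x₀ : V} {M N : ℕ} {a b : ℕ × ℕ → V}
    (h : FaceContigEquiv X x₀ M N a b) : FaceContigEquiv X x₀ M N b a := by
  refine (@Relation.ReflTransGen.stdSymm _ _ ⟨?_⟩).symm _ _ h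
  intro u v ⟨h1, h2, h3⟩
  exact ⟨h2, h1, contiguous_symm h3⟩

end FSAux
namespace FSAux
variable {V : Type} [DecidableEq V]

lemma fsMul_apply_f {x₀ : V} {m n : ℕ} {f g : ℕ × ℕ → V} {p : ℕ × ℕ}
    (h1 : p.1 ≤ m) (h2 : p.2 ≤ n) : fsMul x₀ m n f g p = f p := by
  simp [fsMul, h1, h2]

lemma fsMul_apply_g {x₀ : V} {m n : ℕ} {f g : ℕ × ℕ → V} {p : ℕ × ℕ}
    (h1 : m + 1 ≤ p.1) (h2 : n + 1 ≤ p.2) :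
    fsMul x₀ m n f g p = g (p.1 - (m + 1), p.2 - (n + 1)) := by
  have : ¬ (p.1 ≤ m ∧ p.2 ≤ n) := by omega
  simp [fsMul, this, h1, h2]

lemma fsMul_apply_base {x₀ : V} {m n : ℕ} {f g : ℕ × ℕ → V} {p : ℕ × ℕ}
    (h : ¬ (p.1 ≤ m ∧ p.2 ≤ n)) (h' : ¬ (m + 1 ≤ p.1 ∧ n + 1 ≤ p.2)) :
    fsMul x₀ m n f g p = x₀ := by
  simp [fsMul, h, h']
  intro h1 h2; exact absurd ⟨h1, h2⟩ h'

/-- Trichotomy for faces of the big product complex. -/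
lemma fsMul_trichotomy {m n r t : ℕ} {s : Finset (ℕ × ℕ)}
    (hs : s ∈ (prodInterval (m + r + 1) (n + t + 1)).faces) :
    (∀ p ∈ s, p.1 ≤ m ∧ p.2 ≤ n) ∨ (∀ p ∈ s, m + 1 ≤ p.1 ∧ n + 1 ≤ p.2) ∨
    ((∀ p ∈ s, p.1 ≤ m → p.2 ≤ n → (p.1 = m ∨ p.2 = n)) ∧
     (∀ p ∈ s, m + 1 ≤ p.1 → n + 1 ≤ p.2 → (p.1 = m + 1 ∨ p.2 = n + 1))) := by
  by_cases hA : ∀ p ∈ s, p.1 ≤ m ∧ p.2 ≤ n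
  · exact Or.inl hA
  by_cases hB : ∀ p ∈ s, m + 1 ≤ p.1 ∧ n + 1 ≤ p.2
  · exact Or.inr (Or.inl hB)
  push_neg at hA hB
  obtain ⟨q, hq, hq'⟩ := hA
  obtain ⟨q', hq2, hq2'⟩ := hB
  refine Or.inr (Or.inr ⟨?_, ?_⟩)
  · intro p hp h1 h2
    have h3 := face_step hs p hp q hq
    have h4 := face_step hs q hq p hp
    omega
  · intro p hp h1 h2
    have h3 := face_step hs p hp q' hq2
    have h4 := face_step hs q' hq2 p hp
    omega

/-- Case: all of `s` in the `f`-block. -/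
lemma fsMul_case_f {x₀ : V} {m n r t : ℕ} {f g : ℕ × ℕ → V} {s : Finset (ℕ × ℕ)}
    (hs : s ∈ (prodInterval (m + r + 1) (n + t + 1)).faces)
    (hA : ∀ p ∈ s, p.1 ≤ m ∧ p.2 ≤ n) :
    s ∈ (prodInterval m n).faces ∧ s.image (fsMul x₀ m n f g) = s.image f := by
  constructor
  · obtain ⟨⟨_, h1b⟩, ⟨_, h2b⟩⟩ := hs
    refine ⟨⟨?_, h1b⟩, ⟨?_, h2b⟩⟩
    · intro x hx
      obtain ⟨p, hp, rfl⟩ := Finset.mem_image.mp hx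
      exact (hA p hp).1
    · intro x hx
      obtain ⟨p, hp, rfl⟩ := Finset.mem_image.mp hx
      exact (hA p hp).2
  · exact Finset.image_congr fun p hp => fsMul_apply_f (hA p hp).1 (hA p hp).2

/-- Case: all of `s` in the `g`-block. -/
lemma fsMul_case_g {x₀ : V} {m n r t : ℕ} {f g : ℕ × ℕ → V} {s : Finset (ℕ × ℕ)}
    (hs : s ∈ (prodInterval (m + r + 1) (n + t + 1)).faces)
    (hB : ∀ p ∈ s, m + 1 ≤ p.1 ∧ n + 1 ≤ p.2) :
    s.image (fun p : ℕ × ℕ => (p.1 - (m + 1), p.2 - (n + 1))) ∈ (prodInterval r t).faces ∧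
    s.image (fsMul x₀ m n f g) =
      (s.image (fun p : ℕ × ℕ => (p.1 - (m + 1), p.2 - (n + 1)))).image g := by
  constructor
  · refine ⟨⟨?_, ?_⟩, ⟨?_, ?_⟩⟩ <;>
    · intro x hx
      rw [Finset.image_image] at hx
      obtain ⟨p, hp, rfl⟩ := Finset.mem_image.mp hx
      first
      | exact (by have := face_bounds hs p hp; have := hB p hp; simp; omega)
      | · intro y hy
          rw [Finset.image_image] at hy
          obtain ⟨q, hq, rfl⟩ := Finset.mem_image.mp hy
          have := face_step hs p hp q hq
          have := hB p hp; have := hB q hq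
          simp only [Function.comp_apply]
          omega
  · rw [Finset.image_image]
    exact Finset.image_congr fun p hp => by
      rw [fsMul_apply_g (hB p hp).1 (hB p hp).2]; rfl

/-- Case: `s` straddles; every value is the basepoint. -/
lemma fsMul_case_base {X : ASC V} {x₀ : V} {m n r t : ℕ} {f g : ℕ × ℕ → V}
    {s : Finset (ℕ × ℕ)}
    (hf : IsFaceSphere X x₀ m n f) (hg : IsFaceSphere X x₀ r t g)
    (hs : s ∈ (prodInterval (m + r + 1) (n + t + 1)).faces)
    (hC : (∀ p ∈ s, p.1 ≤ m → p.2 ≤ n → (p.1 = m ∨ p.2 = n)) ∧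
          (∀ p ∈ s, m + 1 ≤ p.1 → n + 1 ≤ p.2 → (p.1 = m + 1 ∨ p.2 = n + 1))) :
    ∀ p ∈ s, fsMul x₀ m n f g p = x₀ := by
  intro p hp
  have hb := face_bounds hs p hp
  by_cases h1 : p.1 ≤ m ∧ p.2 ≤ n
  · rw [fsMul_apply_f h1.1 h1.2]
    exact hf.2 p h1.1 h1.2 (by have := hC.1 p hp h1.1 h1.2; tauto)
  by_cases h2 : m + 1 ≤ p.1 ∧ n + 1 ≤ p.2
  · rw [fsMul_apply_g h2.1 h2.2]
    refine hg.2 _ (by simp; omega) (by simp; omega) ?_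
    have := hC.2 p hp h2.1 h2.2
    simp only
    omega
  · exact fsMul_apply_base h1 h2

end FSAux
namespace FSAux
variable {V : Type} [DecidableEq V]

lemma image_subset_base {x₀ : V} {a : ℕ × ℕ → V} {s : Finset (ℕ × ℕ)}
    (h : ∀ p ∈ s, a p = x₀) : s.image a ⊆ {x₀} := by
  intro v hv
  obtain ⟨p, hp, rfl⟩ := Finset.mem_image.mp hv
  simp [h p hp]

lemma base_mem {X : ASC V} {x₀ : V} (hX : {x₀} ∈ X.faces) {a : ℕ × ℕ → V}
    {s : Finset (ℕ × ℕ)} (h : ∀ p ∈ s, a p = x₀) : s.image a ∈ X.faces :=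
  X.down_closed hX (image_subset_base h)

lemma fsMul_isFaceSphere {X : ASC V} {x₀ : V} (hX : {x₀} ∈ X.faces)
    {m n r t : ℕ} {f g : ℕ × ℕ → V}
    (hf : IsFaceSphere X x₀ m n f) (hg : IsFaceSphere X x₀ r t g) :
    IsFaceSphere X x₀ (m + r + 1) (n + t + 1) (fsMul x₀ m n f g) := by
  constructor
  · intro s hs
    rcases fsMul_trichotomy hs with hA | hB | hC
    · obtain ⟨hface, him⟩ := fsMul_case_f (x₀ := x₀) (f := f) (g := g) hs hA
      rw [him]; exact hf.1 s hface
    · obtain ⟨hface, him⟩ := fsMul_case_g (x₀ := x₀) (f := f) (g := g) hs hB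
      rw [him]; exact hg.1 _ hface
    · exact base_mem hX (fsMul_case_base hf hg hs hC)
  · intro p h1 h2 h3
    by_cases hc1 : p.1 ≤ m ∧ p.2 ≤ n
    · rw [fsMul_apply_f hc1.1 hc1.2]
      exact hf.2 p hc1.1 hc1.2 (by omega)
    by_cases hc2 : m + 1 ≤ p.1 ∧ n + 1 ≤ p.2
    · rw [fsMul_apply_g hc2.1 hc2.2]
      exact hg.2 _ (by simp; omega) (by simp; omega) (by simp; omega)
    · exact fsMul_apply_base hc1 hc2

lemma fsMul_contiguous_left {X : ASC V} {x₀ : V} (hX : {x₀} ∈ X.faces)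
    {m n r t : ℕ} {f f' g : ℕ × ℕ → V}
    (hf : IsFaceSphere X x₀ m n f) (hf' : IsFaceSphere X x₀ m n f')
    (hg : IsFaceSphere X x₀ r t g)
    (hc : Contiguous (prodInterval m n) X f f') :
    Contiguous (prodInterval (m + r + 1) (n + t + 1)) X
      (fsMul x₀ m n f g) (fsMul x₀ m n f' g) := by
  intro s hs
  rcases fsMul_trichotomy hs with hA | hB | hC
  · rw [(fsMul_case_f (x₀ := x₀) (f := f) (g := g) hs hA).2,
      (fsMul_case_f (x₀ := x₀) (f := f') (g := g) hs hA).2]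
    exact hc s (fsMul_case_f (x₀ := x₀) (f := f) (g := g) hs hA).1
  · rw [(fsMul_case_g (x₀ := x₀) (f := f) (g := g) hs hB).2,
      (fsMul_case_g (x₀ := x₀) (f := f') (g := g) hs hB).2, Finset.union_self]
    exact hg.1 _ (fsMul_case_g (x₀ := x₀) (f := f) (g := g) hs hB).1
  · refine X.down_closed hX (Finset.union_subset ?_ ?_) <;>
      exact image_subset_base (fsMul_case_base (by assumption) hg hs hC)

lemma fsMul_contiguous_right {X : ASC V} {x₀ : V} (hX : {x₀} ∈ X.faces)
    {m n r t : ℕ} {f g g' : ℕ × ℕ → V}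
    (hf : IsFaceSphere X x₀ m n f)
    (hg : IsFaceSphere X x₀ r t g) (hg' : IsFaceSphere X x₀ r t g')
    (hc : Contiguous (prodInterval r t) X g g') :
    Contiguous (prodInterval (m + r + 1) (n + t + 1)) X
      (fsMul x₀ m n f g) (fsMul x₀ m n f g') := by
  intro s hs
  rcases fsMul_trichotomy hs with hA | hB | hC
  · rw [(fsMul_case_f (x₀ := x₀) (f := f) (g := g) hs hA).2,
      (fsMul_case_f (x₀ := x₀) (f := f) (g := g') hs hA).2, Finset.union_self]
    exact hf.1 s (fsMul_case_f (x₀ := x₀) (f := f) (g := g) hs hA).1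
  · rw [(fsMul_case_g (x₀ := x₀) (f := f) (g := g) hs hB).2,
      (fsMul_case_g (x₀ := x₀) (f := f) (g := g') hs hB).2]
    exact hc _ (fsMul_case_g (x₀ := x₀) (f := f) (g := g) hs hB).1
  · refine X.down_closed hX (Finset.union_subset ?_ ?_)
    · exact image_subset_base (fsMul_case_base hf hg hs hC)
    · exact image_subset_base (fsMul_case_base hf hg' hs hC)

lemma fsMul_congr_left {X : ASC V} {x₀ : V} (hX : {x₀} ∈ X.faces)
    {m n r t : ℕ} {f f' g : ℕ × ℕ → V}
    (hg : IsFaceSphere X x₀ r t g)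
    (h : FaceContigEquiv X x₀ m n f f') :
    FaceContigEquiv X x₀ (m + r + 1) (n + t + 1)
      (fsMul x₀ m n f g) (fsMul x₀ m n f' g) := by
  refine Relation.ReflTransGen.lift (fun h => fsMul x₀ m n h g) ?_ _ _ h
  rintro a b ⟨h1, h2, h3⟩
  exact ⟨fsMul_isFaceSphere hX h1 hg, fsMul_isFaceSphere hX h2 hg,
    fsMul_contiguous_left hX h1 h2 hg h3⟩

lemma fsMul_congr_right {X : ASC V} {x₀ : V} (hX : {x₀} ∈ X.faces)
    {m n r t : ℕ} {f g g' : ℕ × ℕ → V}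
    (hf : IsFaceSphere X x₀ m n f)
    (h : FaceContigEquiv X x₀ r t g g') :
    FaceContigEquiv X x₀ (m + r + 1) (n + t + 1)
      (fsMul x₀ m n f g) (fsMul x₀ m n f g') := by
  refine Relation.ReflTransGen.lift (fun h => fsMul x₀ m n f h) ?_ _ _ h
  rintro a b ⟨h1, h2, h3⟩
  exact ⟨fsMul_isFaceSphere hX hf h1, fsMul_isFaceSphere hX hf h2,
    fsMul_contiguous_right hX hf h1 h2 h3⟩

end FSAux
namespace FSAux

/-- Admissible collapse maps `[0,M] → [0,K]`: start at `0`, end at `K`, steps `0` or `1`. -/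
def Adm (M K : ℕ) (φ : ℕ → ℕ) : Prop :=
  φ 0 = 0 ∧ φ M = K ∧ ∀ i < M, φ (i + 1) = φ i ∨ φ (i + 1) = φ i + 1

namespace Adm

lemma mono {M K : ℕ} {φ : ℕ → ℕ} (h : Adm M K φ) :
    ∀ j ≤ M, ∀ i ≤ j, φ i ≤ φ j ∧ φ j ≤ φ i + (j - i) := by
  intro j
  induction j with
  | zero =>
    intro _ i hi
    have : i = 0 := by omega
    subst this; omega
  | succ j ih =>
    intro hj i hi
    rcases Nat.eq_or_lt_of_le hi with rfl | hlt
    · omega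
    · have h1 := ih (by omega) i (by omega)
      have h2 := h.2.2 j (by omega)
      omega

lemma le_self {M K : ℕ} {φ : ℕ → ℕ} (h : Adm M K φ) {i : ℕ} (hi : i ≤ M) : φ i ≤ i := by
  have h1 := h.mono i hi 0 (by omega)
  have h0 := h.1
  omega

lemma le_K {M K : ℕ} {φ : ℕ → ℕ} (h : Adm M K φ) {i : ℕ} (hi : i ≤ M) : φ i ≤ K := by
  have h1 := h.mono M le_rfl i hi
  have hM := h.2.1
  omega

lemma K_le_M {M K : ℕ} {φ : ℕ → ℕ} (h : Adm M K φ) : K ≤ M := by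
  have h1 := h.le_self (le_refl M)
  have hM := h.2.1
  omega

lemma le_min {M K : ℕ} {φ : ℕ → ℕ} (h : Adm M K φ) {i : ℕ} (hi : i ≤ M) :
    φ i ≤ min i K :=
  _root_.le_min (h.le_self hi) (h.le_K hi)

lemma step_le {M K : ℕ} {φ : ℕ → ℕ} (h : Adm M K φ) {x y : ℕ}
    (hx : x ≤ M) (hy : y ≤ M) (hxy : x ≤ y + 1) : φ x ≤ φ y + 1 := by
  rcases le_or_gt x y with hc | hc
  · have := h.mono y hy x hc; omega
  · have hxy' : x = y + 1 := by omega
    subst hxy'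
    have := h.2.2 y (by omega)
    omega

lemma simplicial {M K : ℕ} {φ : ℕ → ℕ} (h : Adm M K φ) :
    IsSimplicialMap (interval M) (interval K) φ := by
  intro s hs
  refine ⟨?_, ?_⟩
  · intro x hx
    obtain ⟨a, ha, rfl⟩ := Finset.mem_image.mp hx
    exact h.le_K (hs.1 a ha)
  · intro x hx y hy
    obtain ⟨a, ha, rfl⟩ := Finset.mem_image.mp hx
    obtain ⟨b, hb, rfl⟩ := Finset.mem_image.mp hy
    exact h.step_le (hs.1 a ha) (hs.1 b hb) (hs.2 a ha b hb)

end Adm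

lemma adm_top {M K : ℕ} (h : K ≤ M) : Adm M K (fun i => min i K) := by
  refine ⟨by simp, by simp [h], fun i hi => by dsimp only; omega⟩

lemma min_succ_cases (i K : ℕ) : min (i + 1) K = min i K ∨ min (i + 1) K = min i K + 1 := by
  omega

variable {V : Type} [DecidableEq V]

lemma prodMap_image_fst {φ χ : ℕ → ℕ} (s : Finset (ℕ × ℕ)) :
    (s.image (Prod.map φ χ)).image Prod.fst = (s.image Prod.fst).image φ := by
  rw [Finset.image_image, Finset.image_image]; rfl

lemma prodMap_image_snd {φ χ : ℕ → ℕ} (s : Finset (ℕ × ℕ)) :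
    (s.image (Prod.map φ χ)).image Prod.snd = (s.image Prod.snd).image χ := by
  rw [Finset.image_image, Finset.image_image]; rfl

lemma prodMap_simplicial {M N K L : ℕ} {φ χ : ℕ → ℕ}
    (hφ : Adm M K φ) (hχ : Adm N L χ) :
    IsSimplicialMap (prodInterval M N) (prodInterval K L) (Prod.map φ χ) := by
  intro s hs
  refine ⟨?_, ?_⟩
  · rw [prodMap_image_fst]
    exact hφ.simplicial _ hs.1
  · rw [prodMap_image_snd]
    exact hχ.simplicial _ hs.2

lemma comp_isFaceSphere {X : ASC V} {x₀ : V} {K L M N : ℕ} {f : ℕ × ℕ → V}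
    (hf : IsFaceSphere X x₀ K L f) {φ χ : ℕ → ℕ}
    (hφ : Adm M K φ) (hχ : Adm N L χ) :
    IsFaceSphere X x₀ M N (f ∘ Prod.map φ χ) := by
  constructor
  · intro s hs
    rw [show s.image (f ∘ Prod.map φ χ) = (s.image (Prod.map φ χ)).image f from
      (Finset.image_image).symm]
    exact hf.1 _ (prodMap_simplicial hφ hχ s hs)
  · intro p h1 h2 h3
    refine hf.2 _ (hφ.le_K h1) (hχ.le_K h2) ?_
    simp only [Prod.map, Function.comp_apply]
    rcases h3 with h | h | h | h
    · exact Or.inl (by simp [h, hφ.1])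
    · exact Or.inr (Or.inl (by simp [h, hφ.2.1]))
    · exact Or.inr (Or.inr (Or.inl (by simp [h, hχ.1])))
    · exact Or.inr (Or.inr (Or.inr (by simp [h, hχ.2.1])))

end FSAux
namespace FSAux

/-- The deficiency measure of an admissible map against the top map. -/
def meas (M K : ℕ) (φ : ℕ → ℕ) : ℕ := ∑ i ∈ Finset.range (M + 1), (min i K - φ i)

lemma meas_zero_iff {M K : ℕ} {φ : ℕ → ℕ} (h : Adm M K φ) :
    meas M K φ = 0 ↔ ∀ i ≤ M, φ i = min i K := by
  rw [meas, Finset.sum_eq_zero_iff]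
  constructor
  · intro hz i hi
    have h1 := hz i (Finset.mem_range.mpr (by omega))
    have h2 := h.le_min hi
    omega
  · intro hz i hi
    rw [Finset.mem_range] at hi
    rw [hz i (by omega)]
    omega

lemma exists_rise {M K : ℕ} {φ : ℕ → ℕ} (h : Adm M K φ) :
    ∀ c j, j ≤ M → φ j < min j K → M - j ≤ c →
      ∃ i, i ≤ M ∧ φ i < min i K ∧ φ (i + 1) = φ i + 1 := by
  intro c
  induction c with
  | zero =>
    intro j hj hdef hc
    exfalso
    have : j = M := by omega
    subst this
    have := h.2.1
    have := h.K_le_M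
    omega
  | succ c ih =>
    intro j hj hdef hc
    have hjM : j < M := by
      rcases Nat.eq_or_lt_of_le hj with rfl | h'
      · exfalso; have := h.2.1; have := h.K_le_M; omega
      · exact h'
    rcases h.2.2 j hjM with hflat | hrise
    · refine ih (j + 1) (by omega) (by omega) (by omega)
    · exact ⟨j, hj, hdef, hrise⟩

lemma exists_good {M K : ℕ} {φ : ℕ → ℕ} (h : Adm M K φ) (hne : meas M K φ ≠ 0) :
    ∃ i, 1 ≤ i ∧ i < M ∧ φ i < min i K ∧ φ (i + 1) = φ i + 1 ∧ φ (i - 1) = φ i := by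
  classical
  have hex : ∃ j, j ≤ M ∧ φ j < min j K := by
    by_contra hcon
    push_neg at hcon
    refine hne ((meas_zero_iff h).mpr fun i hi => ?_)
    have h1 := hcon i hi
    have h2 := h.le_min hi
    omega
  obtain ⟨j, hj, hdef⟩ := hex
  have hP : ∃ i, i ≤ M ∧ φ i < min i K ∧ φ (i + 1) = φ i + 1 :=
    exists_rise h M j hj hdef (by omega)
  obtain ⟨hiM, hid, hir⟩ := Nat.find_spec hP
  have hKM := h.K_le_M
  have h0 := h.1
  have hM := h.2.1
  have hi1 : 1 ≤ Nat.find hP := by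
    by_contra hcc
    have hz : Nat.find hP = 0 := by omega
    rw [hz] at hid
    omega
  have hiltM : Nat.find hP < M := by
    by_cases hc : Nat.find hP = M
    · rw [hc] at hid; omega
    · omega
  refine ⟨Nat.find hP, hi1, hiltM, hid, hir, ?_⟩
  have hstep := h.2.2 (Nat.find hP - 1) (by omega)
  rw [show Nat.find hP - 1 + 1 = Nat.find hP from by omega] at hstep
  rcases hstep with he | he
  · omega
  · exfalso
    have hmin : φ (Nat.find hP - 1) < min (Nat.find hP - 1) K := by omega
    have hnm := Nat.find_min hP (show Nat.find hP - 1 < Nat.find hP by omega)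
    push_neg at hnm
    have hne2 := hnm (by omega) hmin
    rw [show Nat.find hP - 1 + 1 = Nat.find hP from by omega] at hne2
    omega

lemma increment {M K : ℕ} {φ : ℕ → ℕ} (h : Adm M K φ) (hne : meas M K φ ≠ 0) :
    ∃ φ' : ℕ → ℕ, Adm M K φ' ∧ meas M K φ' + 1 = meas M K φ ∧
      ∀ t ∈ (interval M).faces, t.image φ ∪ t.image φ' ∈ (interval K).faces := by
  obtain ⟨i, hi1, hiltM, hid, hir, hflat⟩ := exists_good h hne
  refine ⟨Function.update φ i (φ i + 1), ⟨?_, ?_, ?_⟩, ?_, ?_⟩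
  · rw [Function.update_of_ne (by omega)]; exact h.1
  · rw [Function.update_of_ne (by omega)]; exact h.2.1
  · intro x hx
    rcases Nat.lt_trichotomy (x + 1) i with hc | hc | hc
    · rw [Function.update_of_ne (by omega), Function.update_of_ne (by omega)]
      exact h.2.2 x hx
    · rw [hc, Function.update_self, Function.update_of_ne (by omega)]
      rw [show x = i - 1 from by omega, hflat]
      omega
    · by_cases hxi : x = i
      · subst hxi
        rw [Function.update_of_ne (by omega), Function.update_self, hir]
        omega
      · rw [Function.update_of_ne (by omega), Function.update_of_ne (by omega)]
        exact h.2.2 x hx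
  · -- measure decreases
    have hpt : ∀ x ∈ Finset.range (M + 1),
        min x K - φ x = (min x K - Function.update φ i (φ i + 1) x) + (if x = i then 1 else 0) := by
      intro x _
      by_cases hxi : x = i
      · subst hxi
        rw [Function.update_self, if_pos rfl]
        omega
      · rw [Function.update_of_ne hxi, if_neg hxi]
        omega
    rw [meas, meas, Finset.sum_congr rfl hpt, Finset.sum_add_distrib,
      Finset.sum_ite_eq' (Finset.range (M + 1)) i (fun _ => 1)]
    simp [Finset.mem_range.mpr (show i < M + 1 by omega)]
  · -- 1-d contiguity union
    intro t ht
    by_cases hmem : i ∈ t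
    · refine (interval K).down_closed (s := {φ i, φ i + 1}) ⟨?_, ?_⟩ ?_
      · intro x hx
        simp only [Finset.mem_insert, Finset.mem_singleton] at hx
        rcases hx with rfl | rfl <;> omega
      · intro x hx y hy
        simp only [Finset.mem_insert, Finset.mem_singleton] at hx hy
        rcases hx with rfl | rfl <;> rcases hy with rfl | rfl <;> omega
      · intro v hv
        have key : ∀ x ∈ t, φ x ∈ ({φ i, φ i + 1} : Finset ℕ) ∧
            Function.update φ i (φ i + 1) x ∈ ({φ i, φ i + 1} : Finset ℕ) := by
          intro x hx
          have hx1 := ht.2 x hx i hmem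
          have hx2 := ht.2 i hmem x hx
          have hx3 : x = i - 1 ∨ x = i ∨ x = i + 1 := by omega
          simp only [Finset.mem_insert, Finset.mem_singleton]
          rcases hx3 with rfl | rfl | rfl
          · rw [Function.update_of_ne (by omega), hflat]
            omega
          · rw [Function.update_self]
            omega
          · rw [Function.update_of_ne (by omega), hir]
            omega
        rcases Finset.mem_union.mp hv with hv | hv <;>
          obtain ⟨x, hx, rfl⟩ := Finset.mem_image.mp hv
        · exact (key x hx).1
        · exact (key x hx).2
    · have himg : t.image (Function.update φ i (φ i + 1)) = t.image φ :=
        Finset.image_congr fun x hx => Function.update_of_ne (fun hh : x = i => hmem (hh ▸ hx)) _ _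
      rw [himg, Finset.union_self]
      exact h.simplicial t ht

end FSAux
namespace FSAux
variable {V : Type} [DecidableEq V]

lemma image_comp_prodMap (f : ℕ × ℕ → V) (φ χ : ℕ → ℕ) (s : Finset (ℕ × ℕ)) :
    s.image (f ∘ Prod.map φ χ) = (s.image (Prod.map φ χ)).image f :=
  (Finset.image_image).symm

lemma step_fst {X : ASC V} {x₀ : V} {K L M N : ℕ} {f : ℕ × ℕ → V}
    (hf : IsFaceSphere X x₀ K L f) {φ φ' χ : ℕ → ℕ}
    (hχ : Adm N L χ)
    (hunion : ∀ t ∈ (interval M).faces, t.image φ ∪ t.image φ' ∈ (interval K).faces) :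
    Contiguous (prodInterval M N) X (f ∘ Prod.map φ χ) (f ∘ Prod.map φ' χ) := by
  intro s hs
  rw [image_comp_prodMap, image_comp_prodMap, ← Finset.image_union]
  refine hf.1 _ ⟨?_, ?_⟩
  · rw [Finset.image_union, prodMap_image_fst, prodMap_image_fst]
    exact hunion _ hs.1
  · rw [Finset.image_union, prodMap_image_snd, prodMap_image_snd, Finset.union_self]
    exact hχ.simplicial _ hs.2

lemma step_snd {X : ASC V} {x₀ : V} {K L M N : ℕ} {f : ℕ × ℕ → V}
    (hf : IsFaceSphere X x₀ K L f) {φ χ χ' : ℕ → ℕ}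
    (hφ : Adm M K φ)
    (hunion : ∀ t ∈ (interval N).faces, t.image χ ∪ t.image χ' ∈ (interval L).faces) :
    Contiguous (prodInterval M N) X (f ∘ Prod.map φ χ) (f ∘ Prod.map φ χ') := by
  intro s hs
  rw [image_comp_prodMap, image_comp_prodMap, ← Finset.image_union]
  refine hf.1 _ ⟨?_, ?_⟩
  · rw [Finset.image_union, prodMap_image_fst, prodMap_image_fst, Finset.union_self]
    exact hφ.simplicial _ hs.1
  · rw [Finset.image_union, prodMap_image_snd, prodMap_image_snd]
    exact hunion _ hs.2

lemma chain_fst {X : ASC V} {x₀ : V} {K L M N : ℕ} {f : ℕ × ℕ → V}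
    (hf : IsFaceSphere X x₀ K L f) {χ : ℕ → ℕ} (hχ : Adm N L χ) (d : ℕ) :
    ∀ φ : ℕ → ℕ, Adm M K φ → meas M K φ ≤ d →
      FaceContigEquiv X x₀ M N (f ∘ Prod.map φ χ)
        (f ∘ Prod.map (fun i => min i K) χ) := by
  induction d with
  | zero =>
    intro φ hφ hm
    have hm0 : meas M K φ = 0 := by omega
    have hg : GridEq M N (f ∘ Prod.map φ χ) (f ∘ Prod.map (fun i => min i K) χ) := by
      intro p h1 h2
      simp only [Function.comp_apply, Prod.map]
      rw [(meas_zero_iff hφ).mp hm0 p.1 h1]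
    exact hg.faceContigEquiv (comp_isFaceSphere hf hφ hχ)
  | succ d ih =>
    intro φ hφ hm
    by_cases hm0 : meas M K φ = 0
    have hg : GridEq M N (f ∘ Prod.map φ χ) (f ∘ Prod.map (fun i => min i K) χ) := by
      intro p h1 h2
      simp only [Function.comp_apply, Prod.map]
      rw [(meas_zero_iff hφ).mp hm0 p.1 h1]
    · exact hg.faceContigEquiv (comp_isFaceSphere hf hφ hχ)
    · obtain ⟨φ', hφ', hmeas, hunion⟩ := increment hφ hm0
      refine Relation.ReflTransGen.head
        ⟨comp_isFaceSphere hf hφ hχ, comp_isFaceSphere hf hφ' hχ,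
          step_fst hf hχ hunion⟩ (ih φ' hφ' (by omega))

lemma chain_snd {X : ASC V} {x₀ : V} {K L M N : ℕ} {f : ℕ × ℕ → V}
    (hf : IsFaceSphere X x₀ K L f) {φ : ℕ → ℕ} (hφ : Adm M K φ) (d : ℕ) :
    ∀ χ : ℕ → ℕ, Adm N L χ → meas N L χ ≤ d →
      FaceContigEquiv X x₀ M N (f ∘ Prod.map φ χ)
        (f ∘ Prod.map φ (fun i => min i L)) := by
  induction d with
  | zero =>
    intro χ hχ hm
    have hm0 : meas N L χ = 0 := by omega
    have hg : GridEq M N (f ∘ Prod.map φ χ) (f ∘ Prod.map φ (fun i => min i L)) := by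
      intro p h1 h2
      simp only [Function.comp_apply, Prod.map]
      rw [(meas_zero_iff hχ).mp hm0 p.2 h2]
    exact hg.faceContigEquiv (comp_isFaceSphere hf hφ hχ)
  | succ d ih =>
    intro χ hχ hm
    by_cases hm0 : meas N L χ = 0
    have hg : GridEq M N (f ∘ Prod.map φ χ) (f ∘ Prod.map φ (fun i => min i L)) := by
      intro p h1 h2
      simp only [Function.comp_apply, Prod.map]
      rw [(meas_zero_iff hχ).mp hm0 p.2 h2]
    · exact hg.faceContigEquiv (comp_isFaceSphere hf hφ hχ)
    · obtain ⟨χ', hχ', hmeas, hunion⟩ := increment hχ hm0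
      refine Relation.ReflTransGen.head
        ⟨comp_isFaceSphere hf hφ hχ, comp_isFaceSphere hf hφ hχ',
          step_snd hf hφ hunion⟩ (ih χ' hχ' (by omega))

/-- Composition with any admissible pair is equivalent to composition with the top pair. -/
lemma chain_top {X : ASC V} {x₀ : V} {K L M N : ℕ} {f : ℕ × ℕ → V}
    (hf : IsFaceSphere X x₀ K L f) {φ χ : ℕ → ℕ} (hφ : Adm M K φ) (hχ : Adm N L χ) :
    FaceContigEquiv X x₀ M N (f ∘ Prod.map φ χ)
      (f ∘ Prod.map (fun i => min i K) (fun i => min i L)) :=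
  Relation.ReflTransGen.trans
    (chain_fst hf hχ (meas M K φ) φ hφ le_rfl)
    (chain_snd hf (adm_top hφ.K_le_M) (meas N L χ) χ hχ le_rfl)

lemma chain_any {X : ASC V} {x₀ : V} {K L M N : ℕ} {f : ℕ × ℕ → V}
    (hf : IsFaceSphere X x₀ K L f) {φ χ φ' χ' : ℕ → ℕ}
    (hφ : Adm M K φ) (hχ : Adm N L χ) (hφ' : Adm M K φ') (hχ' : Adm N L χ') :
    FaceContigEquiv X x₀ M N (f ∘ Prod.map φ χ) (f ∘ Prod.map φ' χ') :=
  Relation.ReflTransGen.trans (chain_top hf hφ hχ)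
    (faceContigEquiv_symm (chain_top hf hφ' hχ'))

end FSAux
namespace FSAux
variable {V : Type} [DecidableEq V]

lemma GridEq.symm {M N : ℕ} {a b : ℕ × ℕ → V} (h : GridEq M N a b) : GridEq M N b a :=
  fun p h1 h2 => (h p h1 h2).symm

lemma alpha_iterate (K : ℕ) : ∀ a i, i ≤ K + a → (alpha K)^[a] i = min i K := by
  intro a
  induction a with
  | zero => intro i hi; simp; omega
  | succ a ih =>
    intro i hi
    rw [Function.iterate_succ, Function.comp_apply]
    by_cases hc : i ≤ K
    · rw [show alpha K i = i from by simp [alpha, hc], ih i (by omega)]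
    · rw [show alpha K i = i - 1 from by simp [alpha, hc], ih (i - 1) (by omega)]
      omega

lemma trivExt_gridEq {K L M N : ℕ} (hK : K ≤ M) (hL : L ≤ N) (f : ℕ × ℕ → V) :
    GridEq M N (trivExt K L (M - K) (N - L) f)
      (f ∘ Prod.map (fun i => min i K) (fun i => min i L)) := by
  intro p h1 h2
  simp only [trivExt, Function.comp_apply, Prod.map]
  rw [alpha_iterate K (M - K) p.1 (by omega), alpha_iterate L (N - L) p.2 (by omega)]

lemma base_face {X : ASC V} {x₀ : V} {m n : ℕ} {f : ℕ × ℕ → V}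
    (hf : IsFaceSphere X x₀ m n f) : {x₀} ∈ X.faces := by
  have h1 : ({((0 : ℕ), (0 : ℕ))} : Finset (ℕ × ℕ)) ∈ (prodInterval m n).faces := by
    refine ⟨⟨?_, ?_⟩, ⟨?_, ?_⟩⟩ <;> intro x hx <;> simp_all
  have h2 := hf.1 _ h1
  rw [Finset.image_singleton, hf.2 (0, 0) (by omega) (by omega) (Or.inl rfl)] at h2
  exact h2

lemma trivExt_isFaceSphere {X : ASC V} {x₀ : V} {K L M N : ℕ} {f : ℕ × ℕ → V}
    (hf : IsFaceSphere X x₀ K L f) (hK : K ≤ M) (hL : L ≤ N) :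
    IsFaceSphere X x₀ M N (trivExt K L (M - K) (N - L) f) :=
  (trivExt_gridEq hK hL f).symm.isFaceSphere
    (comp_isFaceSphere hf (adm_top hK) (adm_top hL))

/-- The collapse map sending `[0,Mf]` onto `[0,m]` and `[Mf+1, Mf+Mg+1]` onto
`[m+1, m+r+1]`. -/
def blockMap (m Mf r : ℕ) : ℕ → ℕ := fun i =>
  if i ≤ Mf then min i m else m + 1 + min (i - (Mf + 1)) r

lemma adm_blockMap {m Mf r Mg : ℕ} (hm : m ≤ Mf) (hr : r ≤ Mg) :
    Adm (Mf + Mg + 1) (m + r + 1) (blockMap m Mf r) := by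
  refine ⟨by simp [blockMap], ?_, ?_⟩
  · have h1 : ¬ Mf + Mg + 1 ≤ Mf := by omega
    simp [blockMap, h1]
    omega
  · intro i hi
    by_cases h1 : i + 1 ≤ Mf
    · simp [blockMap, h1, show i ≤ Mf from by omega]
      omega
    by_cases h2 : i ≤ Mf
    · simp [blockMap, h1, h2]
      omega
    · simp [blockMap, h1, h2]
      omega

lemma block_gridEq {x₀ : V} {m n r t Mf Nf Mg Ng : ℕ}
    (hm : m ≤ Mf) (hn : n ≤ Nf) (hr : r ≤ Mg) (ht : t ≤ Ng)
    (f g : ℕ × ℕ → V) :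
    GridEq (Mf + Mg + 1) (Nf + Ng + 1)
      (fsMul x₀ m n f g ∘ Prod.map (blockMap m Mf r) (blockMap n Nf t))
      (fsMul x₀ Mf Nf (trivExt m n (Mf - m) (Nf - n) f)
        (trivExt r t (Mg - r) (Ng - t) g)) := by
  rintro ⟨i, j⟩ h1 h2
  simp only [Function.comp_apply, Prod.map]
  by_cases hcase1 : i ≤ Mf ∧ j ≤ Nf
  · obtain ⟨hi, hj⟩ := hcase1
    rw [fsMul_apply_f (p := ((i : ℕ), (j : ℕ))) hi hj]
    simp only [trivExt, Function.comp_apply, Prod.map]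
    rw [alpha_iterate m (Mf - m) i (by omega), alpha_iterate n (Nf - n) j (by omega)]
    have hψi : blockMap m Mf r i = min i m := by simp [blockMap, hi]
    have hψj : blockMap n Nf t j = min j n := by simp [blockMap, hj]
    rw [hψi, hψj, fsMul_apply_f (p := (min i m, min j n)) (by omega) (by omega)]
  by_cases hcase2 : Mf + 1 ≤ i ∧ Nf + 1 ≤ j
  · obtain ⟨hi, hj⟩ := hcase2
    rw [fsMul_apply_g (p := ((i : ℕ), (j : ℕ))) hi hj]
    simp only [trivExt, Function.comp_apply, Prod.map]
    rw [alpha_iterate r (Mg - r) _ (by simp; omega), alpha_iterate t (Ng - t) _ (by simp; omega)]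
    have hψi : blockMap m Mf r i = m + 1 + min (i - (Mf + 1)) r := by
      simp [blockMap, show ¬ i ≤ Mf from by omega]
    have hψj : blockMap n Nf t j = n + 1 + min (j - (Nf + 1)) t := by
      simp [blockMap, show ¬ j ≤ Nf from by omega]
    rw [hψi, hψj,
      fsMul_apply_g (p := (m + 1 + min (i - (Mf + 1)) r, n + 1 + min (j - (Nf + 1)) t))
        (by omega) (by omega)]
    simp only
    congr 1
    simp only [Prod.mk.injEq]
    omega
  · -- mixed region: both sides are the basepoint
    rw [fsMul_apply_base (p := ((i : ℕ), (j : ℕ))) (by omega) (by omega)]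
    by_cases hi : i ≤ Mf
    · have hj : ¬ j ≤ Nf := by omega
      have hψi : blockMap m Mf r i = min i m := by simp [blockMap, hi]
      have hψj : blockMap n Nf t j = n + 1 + min (j - (Nf + 1)) t := by
        simp [blockMap, hj]
      rw [hψi, hψj,
        fsMul_apply_base (p := (min i m, n + 1 + min (j - (Nf + 1)) t)) (by dsimp only; omega)
          (by dsimp only; omega)]
    · have hψi : blockMap m Mf r i = m + 1 + min (i - (Mf + 1)) r := by
        simp [blockMap, hi]
      by_cases hj : j ≤ Nf
      · have hψj : blockMap n Nf t j = min j n := by simp [blockMap, hj]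
        rw [hψi, hψj,
          fsMul_apply_base (p := (m + 1 + min (i - (Mf + 1)) r, min j n)) (by dsimp only; omega)
            (by dsimp only; omega)]
      · omega

/-- One side of the final assembly. -/
lemma side_equiv {X : ASC V} {x₀ : V} {m n r t Mf Nf Mg Ng : ℕ}
    (hm : m ≤ Mf) (hn : n ≤ Nf) (hr : r ≤ Mg) (ht : t ≤ Ng)
    {f g : ℕ × ℕ → V}
    (hf : IsFaceSphere X x₀ m n f) (hg : IsFaceSphere X x₀ r t g) :
    FaceContigEquiv X x₀ (Mf + Mg + 1) (Nf + Ng + 1)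
      (trivExt (m + r + 1) (n + t + 1) ((Mf + Mg + 1) - (m + r + 1))
        ((Nf + Ng + 1) - (n + t + 1)) (fsMul x₀ m n f g))
      (fsMul x₀ Mf Nf (trivExt m n (Mf - m) (Nf - n) f)
        (trivExt r t (Mg - r) (Ng - t) g)) := by
  have hX : {x₀} ∈ X.faces := base_face hf
  have hP : IsFaceSphere X x₀ (m + r + 1) (n + t + 1) (fsMul x₀ m n f g) :=
    fsMul_isFaceSphere hX hf hg
  have hK : m + r + 1 ≤ Mf + Mg + 1 := by omega
  have hL : n + t + 1 ≤ Nf + Ng + 1 := by omega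
  refine Relation.ReflTransGen.trans
    ((trivExt_gridEq hK hL (fsMul x₀ m n f g)).faceContigEquiv
      (trivExt_isFaceSphere hP hK hL)) ?_
  refine Relation.ReflTransGen.trans
    (faceContigEquiv_symm (chain_top (M := Mf + Mg + 1) (N := Nf + Ng + 1) hP
      (adm_blockMap hm hr) (adm_blockMap hn ht))) ?_
  exact (block_gridEq hm hn hr ht f g).faceContigEquiv
    (comp_isFaceSphere hP (adm_blockMap hm hr) (adm_blockMap hn ht))

end FSAux
/-- the product of face spheres is well defined on
extension-contiguity equivalence classes. -/
theorem fsMul_well_defined {V : Type} [DecidableEq V] (X : ASC V) (x₀ : V)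
    (m₁ n₁ m₂ n₂ r₁ s₁ r₂ s₂ : ℕ) (f₁ f₂ g₁ g₂ : ℕ × ℕ → V)
    (hf₁ : IsFaceSphere X x₀ m₁ n₁ f₁) (hf₂ : IsFaceSphere X x₀ m₂ n₂ f₂)
    (hg₁ : IsFaceSphere X x₀ r₁ s₁ g₁) (hg₂ : IsFaceSphere X x₀ r₂ s₂ g₂)
    (hf : ExtContigEquiv X x₀ m₁ n₁ f₁ m₂ n₂ f₂)
    (hg : ExtContigEquiv X x₀ r₁ s₁ g₁ r₂ s₂ g₂) :
    ExtContigEquiv X x₀ (m₁ + r₁ + 1) (n₁ + s₁ + 1) (fsMul x₀ m₁ n₁ f₁ g₁)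
      (m₂ + r₂ + 1) (n₂ + s₂ + 1) (fsMul x₀ m₂ n₂ f₂ g₂) := by
  obtain ⟨Mf, Nf, hm1, hm2, hn1, hn2, hFF⟩ := hf
  obtain ⟨Mg, Ng, hr1, hr2, hs1, hs2, hGG⟩ := hg
  have hX : {x₀} ∈ X.faces := FSAux.base_face hf₁
  refine ⟨Mf + Mg + 1, Nf + Ng + 1, by omega, by omega, by omega, by omega, ?_⟩
  refine Relation.ReflTransGen.trans (FSAux.side_equiv hm1 hn1 hr1 hs1 hf₁ hg₁) ?_
  refine Relation.ReflTransGen.trans ?_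
    (FSAux.faceContigEquiv_symm (FSAux.side_equiv hm2 hn2 hr2 hs2 hf₂ hg₂))
  exact Relation.ReflTransGen.trans
    (FSAux.fsMul_congr_left hX (FSAux.trivExt_isFaceSphere hg₁ hr1 hs1) hFF)
    (FSAux.fsMul_congr_right hX (FSAux.trivExt_isFaceSphere hf₂ hm2 hn2) hGG)
end

section
/- The set F(X, x₀) of extension-contiguity equivalence classes of face spheres in a based simplicial complex (X, x₀), with multiplication [f]·[g] = [f·g], is a group; the identity is the class of the constant face sphere at x₀, and the inverse of [f] (for f of size m×n) is the class of the face sphere f̃ defined by f̃(i,j) = f(m−i, j). -/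
variable {U V W : Type}

namespace FaceGroupAux

variable {V : Type} [DecidableEq V] {X : ASC V} {x₀ : V} {m n : ℕ} {f : ℕ × ℕ → V}

/-! ### Basic helpers about faces of `prodInterval` -/

lemma face_bound {M N : ℕ} {s : Finset (ℕ × ℕ)} (hs : s ∈ (prodInterval M N).faces) :
    ∀ p ∈ s, p.1 ≤ M ∧ p.2 ≤ N := by
  intro p hp
  exact ⟨hs.1.1 p.1 (Finset.mem_image_of_mem _ hp), hs.2.1 p.2 (Finset.mem_image_of_mem _ hp)⟩

lemma face_close {M N : ℕ} {s : Finset (ℕ × ℕ)} (hs : s ∈ (prodInterval M N).faces) :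
    ∀ p ∈ s, ∀ q ∈ s, p.1 ≤ q.1 + 1 ∧ p.2 ≤ q.2 + 1 := by
  intro p hp q hq
  exact ⟨hs.1.2 p.1 (Finset.mem_image_of_mem _ hp) q.1 (Finset.mem_image_of_mem _ hq),
    hs.2.2 p.2 (Finset.mem_image_of_mem _ hp) q.2 (Finset.mem_image_of_mem _ hq)⟩

lemma mk_face {M N : ℕ} {t : Finset (ℕ × ℕ)}
    (h1 : ∀ p ∈ t, p.1 ≤ M ∧ p.2 ≤ N)
    (h2 : ∀ p ∈ t, ∀ q ∈ t, p.1 ≤ q.1 + 1 ∧ p.2 ≤ q.2 + 1) :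
    t ∈ (prodInterval M N).faces := by
  constructor
  · constructor
    · intro x hx
      obtain ⟨p, hp, rfl⟩ := Finset.mem_image.1 hx
      exact (h1 p hp).1
    · intro x hx y hy
      obtain ⟨p, hp, rfl⟩ := Finset.mem_image.1 hx
      obtain ⟨q, hq, rfl⟩ := Finset.mem_image.1 hy
      exact (h2 p hp q hq).1
  · constructor
    · intro x hx
      obtain ⟨p, hp, rfl⟩ := Finset.mem_image.1 hx
      exact (h1 p hp).2
    · intro x hx y hy
      obtain ⟨p, hp, rfl⟩ := Finset.mem_image.1 hx
      obtain ⟨q, hq, rfl⟩ := Finset.mem_image.1 hy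
      exact (h2 p hp q hq).2

lemma singleton_face (hf : IsFaceSphere X x₀ m n f) : {x₀} ∈ X.faces := by
  have h0 : ({((0 : ℕ), (0 : ℕ))} : Finset (ℕ × ℕ)) ∈ (prodInterval m n).faces := by
    apply mk_face <;> simp
  have := hf.1 _ h0
  rwa [Finset.image_singleton, hf.2 (0, 0) (Nat.zero_le _) (Nat.zero_le _) (Or.inl rfl)] at this

lemma empty_face (hf : IsFaceSphere X x₀ m n f) : (∅ : Finset V) ∈ X.faces :=
  X.down_closed (singleton_face hf) (Finset.empty_subset _)

/-! ### Closeness of reparametrizations -/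

/-- `u` and `v` send close inputs in `[lo, hi]` to close values `≤ m`. -/
def Cl (m lo hi : ℕ) (u v : ℕ → ℕ) : Prop :=
  ∀ i i', lo ≤ i → i ≤ hi → lo ≤ i' → i' ≤ hi → i ≤ i' + 1 → i' ≤ i + 1 →
    u i ≤ m ∧ v i' ≤ m ∧ u i ≤ v i' + 1 ∧ v i' ≤ u i + 1

lemma simp_of_contig {K : ASC (ℕ × ℕ)} {A : ℕ × ℕ → V}
    (h : Contiguous K X A A) : IsSimplicialMap K X A := by
  intro s hs
  have := h s hs
  rwa [Finset.union_self] at this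

lemma fce_step {M N : ℕ} {A B : ℕ × ℕ → V} (h1 : IsFaceSphere X x₀ M N A)
    (h2 : IsFaceSphere X x₀ M N B) (h3 : Contiguous (prodInterval M N) X A B) :
    FaceContigEquiv X x₀ M N A B :=
  Relation.ReflTransGen.single ⟨h1, h2, h3⟩

lemma fce_trans {M N : ℕ} {A B C : ℕ × ℕ → V} (h1 : FaceContigEquiv X x₀ M N A B)
    (h2 : FaceContigEquiv X x₀ M N B C) : FaceContigEquiv X x₀ M N A C :=
  Relation.ReflTransGen.trans h1 h2

lemma contig_symm {K : ASC (ℕ × ℕ)} {A B : ℕ × ℕ → V}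
    (h : Contiguous K X A B) : Contiguous K X B A := by
  intro s hs
  rw [Finset.union_comm]
  exact h s hs

lemma fce_symm {M N : ℕ} {A B : ℕ × ℕ → V} (h : FaceContigEquiv X x₀ M N A B) :
    FaceContigEquiv X x₀ M N B A := by
  induction h with
  | refl => exact Relation.ReflTransGen.refl
  | tail h1 h2 ih => exact Relation.ReflTransGen.head ⟨h2.2.1, h2.1, contig_symm h2.2.2⟩ ih

end FaceGroupAux
namespace FaceGroupAux

variable {V : Type} [DecidableEq V] {X : ASC V} {x₀ : V} {m n : ℕ} {f : ℕ × ℕ → V}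

/-! ### Contiguity of product reparametrizations of a single map -/

lemma contig_close {M N : ℕ} (hf : IsSimplicialMap (prodInterval m n) X f)
    {φ φ' ν ν' : ℕ → ℕ}
    (H : Cl m 0 M φ φ) (H' : Cl m 0 M φ' φ') (Hx : Cl m 0 M φ φ')
    (Vv : Cl n 0 N ν ν) (V' : Cl n 0 N ν' ν') (Vx : Cl n 0 N ν ν') :
    Contiguous (prodInterval M N) X (fun p => f (φ p.1, ν p.2))
      (fun p => f (φ' p.1, ν' p.2)) := by
  intro s hs
  set w : ℕ × ℕ → ℕ × ℕ := fun p => (φ p.1, ν p.2) with hw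
  set w' : ℕ × ℕ → ℕ × ℕ := fun p => (φ' p.1, ν' p.2) with hw'
  have ht : s.image w ∪ s.image w' ∈ (prodInterval m n).faces := by
    apply mk_face
    · intro p hp
      rcases Finset.mem_union.1 hp with hp | hp <;>
        obtain ⟨q, hq, rfl⟩ := Finset.mem_image.1 hp
      · obtain ⟨h1, h2⟩ := face_bound hs q hq
        exact ⟨(H q.1 q.1 (Nat.zero_le _) h1 (Nat.zero_le _) h1 (by omega) (by omega)).1,
          (Vv q.2 q.2 (Nat.zero_le _) h2 (Nat.zero_le _) h2 (by omega) (by omega)).1⟩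
      · obtain ⟨h1, h2⟩ := face_bound hs q hq
        exact ⟨(H' q.1 q.1 (Nat.zero_le _) h1 (Nat.zero_le _) h1 (by omega) (by omega)).1,
          (V' q.2 q.2 (Nat.zero_le _) h2 (Nat.zero_le _) h2 (by omega) (by omega)).1⟩
    · intro p hp q hq
      rcases Finset.mem_union.1 hp with hp | hp <;> rcases Finset.mem_union.1 hq with hq | hq <;>
        obtain ⟨a, ha, rfl⟩ := Finset.mem_image.1 hp <;>
        obtain ⟨b, hb, rfl⟩ := Finset.mem_image.1 hq <;>
        obtain ⟨ha1, ha2⟩ := face_bound hs a ha <;>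
        obtain ⟨hb1, hb2⟩ := face_bound hs b hb <;>
        obtain ⟨hab1, hab2⟩ := face_close hs a ha b hb <;>
        obtain ⟨hba1, hba2⟩ := face_close hs b hb a ha
      · exact ⟨(H a.1 b.1 (Nat.zero_le _) ha1 (Nat.zero_le _) hb1 hab1 hba1).2.2.1,
          (Vv a.2 b.2 (Nat.zero_le _) ha2 (Nat.zero_le _) hb2 hab2 hba2).2.2.1⟩
      · exact ⟨(Hx a.1 b.1 (Nat.zero_le _) ha1 (Nat.zero_le _) hb1 hab1 hba1).2.2.1,
          (Vx a.2 b.2 (Nat.zero_le _) ha2 (Nat.zero_le _) hb2 hab2 hba2).2.2.1⟩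
      · exact ⟨(Hx b.1 a.1 (Nat.zero_le _) hb1 (Nat.zero_le _) ha1 hba1 hab1).2.2.2,
          (Vx b.2 a.2 (Nat.zero_le _) hb2 (Nat.zero_le _) ha2 hba2 hab2).2.2.2⟩
      · exact ⟨(H' a.1 b.1 (Nat.zero_le _) ha1 (Nat.zero_le _) hb1 hab1 hba1).2.2.1,
          (V' a.2 b.2 (Nat.zero_le _) ha2 (Nat.zero_le _) hb2 hab2 hba2).2.2.1⟩
  have := hf _ ht
  rwa [Finset.image_union, Finset.image_image, Finset.image_image] at this

lemma faceSphere_close {M N : ℕ} (hf : IsFaceSphere X x₀ m n f) {φ ν : ℕ → ℕ}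
    (H : Cl m 0 M φ φ) (Vv : Cl n 0 N ν ν)
    (b0 : ∀ q ≤ n, f (φ 0, q) = x₀) (bM : ∀ q ≤ n, f (φ M, q) = x₀)
    (v0 : ν 0 = 0 ∨ ν 0 = n) (vN : ν N = 0 ∨ ν N = n) :
    IsFaceSphere X x₀ M N (fun p => f (φ p.1, ν p.2)) := by
  constructor
  · exact simp_of_contig (contig_close hf.1 H H H Vv Vv Vv)
  · intro p hp1 hp2 hb
    obtain ⟨i, j⟩ := p
    simp only at hp1 hp2 hb
    have hφ : φ i ≤ m :=
      (H i i (Nat.zero_le _) hp1 (Nat.zero_le _) hp1 (by omega) (by omega)).1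
    have hν : ν j ≤ n :=
      (Vv j j (Nat.zero_le _) hp2 (Nat.zero_le _) hp2 (by omega) (by omega)).1
    show f (φ i, ν j) = x₀
    rcases hb with h | h | h | h
    · rw [h]; exact b0 _ hν
    · rw [h]; exact bM _ hν
    · rw [h]; rcases v0 with h2 | h2 <;> rw [h2] <;>
        exact hf.2 (φ i, _) hφ (by omega) (by simp)
    · rw [h]; rcases vN with h2 | h2 <;> rw [h2] <;>
        exact hf.2 (φ i, _) hφ (by omega) (by simp)

/-- If `A` is a face sphere and `B` agrees with `A` on the domain, then `B` is a
face sphere one contiguity step from `A`. -/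
lemma bridge {M N : ℕ} {A B : ℕ × ℕ → V} (hA : IsFaceSphere X x₀ M N A)
    (heq : ∀ p : ℕ × ℕ, p.1 ≤ M → p.2 ≤ N → A p = B p) :
    IsFaceSphere X x₀ M N B ∧ FaceContigEquiv X x₀ M N B A ∧
      FaceContigEquiv X x₀ M N A B := by
  have himg : ∀ s ∈ (prodInterval M N).faces, s.image A = s.image B := by
    intro s hs
    apply Finset.image_congr
    intro p hp
    obtain ⟨h1, h2⟩ := face_bound hs p hp
    exact heq p h1 h2
  have hB : IsFaceSphere X x₀ M N B := by
    constructor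
    · intro s hs
      rw [← himg s hs]
      exact hA.1 s hs
    · intro p h1 h2 h3
      rw [← heq p h1 h2]
      exact hA.2 p h1 h2 h3
  have hc : Contiguous (prodInterval M N) X A B := by
    intro s hs
    rw [← himg s hs, Finset.union_self]
    exact hA.1 s hs
  exact ⟨hB, fce_step hB hA (contig_symm hc), fce_step hA hB hc⟩

end FaceGroupAux
namespace FaceGroupAux

variable {V : Type} [DecidableEq V] {X : ASC V} {x₀ : V} {m n : ℕ} {f : ℕ × ℕ → V}

/-- A map on `I_{2m+1} × I_{2n+1}` built from two pieces of `f`. -/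
def pw (f : ℕ × ℕ → V) (m : ℕ) (hL hR νL νR : ℕ → ℕ) : ℕ × ℕ → V :=
  fun p => if p.1 ≤ m then f (hL p.1, νL p.2) else f (hR p.1, νR p.2)

lemma pw_contig (hf : IsFaceSphere X x₀ m n f)
    {hL hL' hR hR' νL νL' νR νR' : ℕ → ℕ}
    (HL : Cl m 0 m hL hL) (HL' : Cl m 0 m hL' hL') (HLx : Cl m 0 m hL hL')
    (HR : Cl m (m+1) (m+m+1) hR hR) (HR' : Cl m (m+1) (m+m+1) hR' hR')
    (HRx : Cl m (m+1) (m+m+1) hR hR')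
    (VL : Cl n 0 (n+n+1) νL νL) (VL' : Cl n 0 (n+n+1) νL' νL')
    (VLx : Cl n 0 (n+n+1) νL νL')
    (VR : Cl n 0 (n+n+1) νR νR) (VR' : Cl n 0 (n+n+1) νR' νR')
    (VRx : Cl n 0 (n+n+1) νR νR')
    (sL : ∀ q ≤ n, f (hL m, q) = x₀) (sL' : ∀ q ≤ n, f (hL' m, q) = x₀)
    (sR : ∀ q ≤ n, f (hR (m+1), q) = x₀) (sR' : ∀ q ≤ n, f (hR' (m+1), q) = x₀) :
    Contiguous (prodInterval (m+m+1) (n+n+1)) X (pw f m hL hR νL νR)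
      (pw f m hL' hR' νL' νR') := by
  intro s hs
  by_cases hall : ∀ p ∈ s, p.1 ≤ m
  · -- everything in the left piece
    set w : ℕ × ℕ → ℕ × ℕ := fun p => (hL p.1, νL p.2) with hw
    set w' : ℕ × ℕ → ℕ × ℕ := fun p => (hL' p.1, νL' p.2) with hw'
    have ht : s.image w ∪ s.image w' ∈ (prodInterval m n).faces := by
      apply mk_face
      · intro p hp
        rcases Finset.mem_union.1 hp with hp | hp <;>
          obtain ⟨q, hq, rfl⟩ := Finset.mem_image.1 hp
        · obtain ⟨h1, h2⟩ := face_bound hs q hq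
          exact ⟨(HL q.1 q.1 (Nat.zero_le _) (hall q hq) (Nat.zero_le _) (hall q hq)
              (by omega) (by omega)).1,
            (VL q.2 q.2 (Nat.zero_le _) h2 (Nat.zero_le _) h2 (by omega) (by omega)).1⟩
        · obtain ⟨h1, h2⟩ := face_bound hs q hq
          exact ⟨(HL' q.1 q.1 (Nat.zero_le _) (hall q hq) (Nat.zero_le _) (hall q hq)
              (by omega) (by omega)).1,
            (VL' q.2 q.2 (Nat.zero_le _) h2 (Nat.zero_le _) h2 (by omega) (by omega)).1⟩
      · intro p hp q hq
        rcases Finset.mem_union.1 hp with hp | hp <;> rcases Finset.mem_union.1 hq with hq | hq <;>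
          obtain ⟨a, ha, rfl⟩ := Finset.mem_image.1 hp <;>
          obtain ⟨b, hb, rfl⟩ := Finset.mem_image.1 hq <;>
          obtain ⟨ha1, ha2⟩ := face_bound hs a ha <;>
          obtain ⟨hb1, hb2⟩ := face_bound hs b hb <;>
          obtain ⟨hab1, hab2⟩ := face_close hs a ha b hb <;>
          obtain ⟨hba1, hba2⟩ := face_close hs b hb a ha
        · exact ⟨(HL a.1 b.1 (Nat.zero_le _) (hall a ha) (Nat.zero_le _) (hall b hb)
              hab1 hba1).2.2.1,
            (VL a.2 b.2 (Nat.zero_le _) ha2 (Nat.zero_le _) hb2 hab2 hba2).2.2.1⟩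
        · exact ⟨(HLx a.1 b.1 (Nat.zero_le _) (hall a ha) (Nat.zero_le _) (hall b hb)
              hab1 hba1).2.2.1,
            (VLx a.2 b.2 (Nat.zero_le _) ha2 (Nat.zero_le _) hb2 hab2 hba2).2.2.1⟩
        · exact ⟨(HLx b.1 a.1 (Nat.zero_le _) (hall b hb) (Nat.zero_le _) (hall a ha)
              hba1 hab1).2.2.2,
            (VLx b.2 a.2 (Nat.zero_le _) hb2 (Nat.zero_le _) ha2 hba2 hab2).2.2.2⟩
        · exact ⟨(HL' a.1 b.1 (Nat.zero_le _) (hall a ha) (Nat.zero_le _) (hall b hb)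
              hab1 hba1).2.2.1,
            (VL' a.2 b.2 (Nat.zero_le _) ha2 (Nat.zero_le _) hb2 hab2 hba2).2.2.1⟩
    have himg : s.image (pw f m hL hR νL νR) ∪ s.image (pw f m hL' hR' νL' νR')
        = (s.image w ∪ s.image w').image f := by
      rw [Finset.image_union, Finset.image_image, Finset.image_image]
      congr 1
      · apply Finset.image_congr
        intro p hp
        simp only [pw, Function.comp, if_pos (hall p hp)]
        rfl
      · apply Finset.image_congr
        intro p hp
        simp only [pw, Function.comp, if_pos (hall p hp)]
        rfl
    rw [himg]
    exact hf.1 _ ht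
  · by_cases hall2 : ∀ p ∈ s, ¬ p.1 ≤ m
    · -- everything in the right piece
      set w : ℕ × ℕ → ℕ × ℕ := fun p => (hR p.1, νR p.2) with hw
      set w' : ℕ × ℕ → ℕ × ℕ := fun p => (hR' p.1, νR' p.2) with hw'
      have ht : s.image w ∪ s.image w' ∈ (prodInterval m n).faces := by
        apply mk_face
        · intro p hp
          rcases Finset.mem_union.1 hp with hp | hp <;>
            obtain ⟨q, hq, rfl⟩ := Finset.mem_image.1 hp
          · obtain ⟨h1, h2⟩ := face_bound hs q hq
            have := hall2 q hq
            exact ⟨(HR q.1 q.1 (by omega) h1 (by omega) h1 (by omega) (by omega)).1,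
              (VR q.2 q.2 (Nat.zero_le _) h2 (Nat.zero_le _) h2 (by omega) (by omega)).1⟩
          · obtain ⟨h1, h2⟩ := face_bound hs q hq
            have := hall2 q hq
            exact ⟨(HR' q.1 q.1 (by omega) h1 (by omega) h1 (by omega) (by omega)).1,
              (VR' q.2 q.2 (Nat.zero_le _) h2 (Nat.zero_le _) h2 (by omega) (by omega)).1⟩
        · intro p hp q hq
          rcases Finset.mem_union.1 hp with hp | hp <;>
            rcases Finset.mem_union.1 hq with hq | hq <;>
            obtain ⟨a, ha, rfl⟩ := Finset.mem_image.1 hp <;>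
            obtain ⟨b, hb, rfl⟩ := Finset.mem_image.1 hq <;>
            obtain ⟨ha1, ha2⟩ := face_bound hs a ha <;>
            obtain ⟨hb1, hb2⟩ := face_bound hs b hb <;>
            obtain ⟨hab1, hab2⟩ := face_close hs a ha b hb <;>
            obtain ⟨hba1, hba2⟩ := face_close hs b hb a ha <;>
            have h2a := hall2 a ha <;> have h2b := hall2 b hb
          · exact ⟨(HR a.1 b.1 (by omega) ha1 (by omega) hb1 hab1 hba1).2.2.1,
              (VR a.2 b.2 (Nat.zero_le _) ha2 (Nat.zero_le _) hb2 hab2 hba2).2.2.1⟩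
          · exact ⟨(HRx a.1 b.1 (by omega) ha1 (by omega) hb1 hab1 hba1).2.2.1,
              (VRx a.2 b.2 (Nat.zero_le _) ha2 (Nat.zero_le _) hb2 hab2 hba2).2.2.1⟩
          · exact ⟨(HRx b.1 a.1 (by omega) hb1 (by omega) ha1 hba1 hab1).2.2.2,
              (VRx b.2 a.2 (Nat.zero_le _) hb2 (Nat.zero_le _) ha2 hba2 hab2).2.2.2⟩
          · exact ⟨(HR' a.1 b.1 (by omega) ha1 (by omega) hb1 hab1 hba1).2.2.1,
              (VR' a.2 b.2 (Nat.zero_le _) ha2 (Nat.zero_le _) hb2 hab2 hba2).2.2.1⟩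
      have himg : s.image (pw f m hL hR νL νR) ∪ s.image (pw f m hL' hR' νL' νR')
          = (s.image w ∪ s.image w').image f := by
        rw [Finset.image_union, Finset.image_image, Finset.image_image]
        congr 1
        · apply Finset.image_congr
          intro p hp
          simp only [pw, Function.comp, if_neg (hall2 p hp)]
          rfl
        · apply Finset.image_congr
          intro p hp
          simp only [pw, Function.comp, if_neg (hall2 p hp)]
          rfl
      rw [himg]
      exact hf.1 _ ht
    · -- mixed: all values are x₀
      push_neg at hall hall2
      obtain ⟨p₁, hp₁, hp₁m⟩ := hall
      obtain ⟨p₂, hp₂, hp₂m⟩ := hall2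
      apply X.down_closed (singleton_face hf)
      apply Finset.union_subset <;> intro x hx <;>
        obtain ⟨q, hq, rfl⟩ := Finset.mem_image.1 hx <;>
        obtain ⟨hq1, hq2⟩ := face_bound hs q hq <;>
        have hc1 := (face_close hs q hq p₂ hp₂).1 <;>
        have hc2 := (face_close hs p₁ hp₁ q hq).1 <;>
        have hq2n : q.2 ≤ n + n + 1 := hq2
      · have hcase : q.1 = m ∨ q.1 = m + 1 := by omega
        rcases hcase with h | h
        · have : pw f m hL hR νL νR q = x₀ := by
            simp only [pw, h, if_pos (le_refl m)]
            exact sL _ (VL q.2 q.2 (Nat.zero_le _) hq2n (Nat.zero_le _) hq2n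
              (by omega) (by omega)).1
          rw [this]; exact Finset.mem_singleton_self _
        · have : pw f m hL hR νL νR q = x₀ := by
            simp only [pw, h, if_neg (by omega : ¬ m + 1 ≤ m)]
            exact sR _ (VR q.2 q.2 (Nat.zero_le _) hq2n (Nat.zero_le _) hq2n
              (by omega) (by omega)).1
          rw [this]; exact Finset.mem_singleton_self _
      · have hcase : q.1 = m ∨ q.1 = m + 1 := by omega
        rcases hcase with h | h
        · have : pw f m hL' hR' νL' νR' q = x₀ := by
            simp only [pw, h, if_pos (le_refl m)]
            exact sL' _ (VL' q.2 q.2 (Nat.zero_le _) hq2n (Nat.zero_le _) hq2n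
              (by omega) (by omega)).1
          rw [this]; exact Finset.mem_singleton_self _
        · have : pw f m hL' hR' νL' νR' q = x₀ := by
            simp only [pw, h, if_neg (by omega : ¬ m + 1 ≤ m)]
            exact sR' _ (VR' q.2 q.2 (Nat.zero_le _) hq2n (Nat.zero_le _) hq2n
              (by omega) (by omega)).1
          rw [this]; exact Finset.mem_singleton_self _

lemma pw_face (hf : IsFaceSphere X x₀ m n f) {hL hR νL νR : ℕ → ℕ}
    (HL : Cl m 0 m hL hL) (HR : Cl m (m+1) (m+m+1) hR hR)
    (VL : Cl n 0 (n+n+1) νL νL) (VR : Cl n 0 (n+n+1) νR νR)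
    (sL : ∀ q ≤ n, f (hL m, q) = x₀) (sR : ∀ q ≤ n, f (hR (m+1), q) = x₀)
    (bL0 : ∀ q ≤ n, f (hL 0, q) = x₀) (bRT : ∀ q ≤ n, f (hR (m+m+1), q) = x₀)
    (vL0 : νL 0 = 0 ∨ νL 0 = n) (vLN : νL (n+n+1) = 0 ∨ νL (n+n+1) = n)
    (vR0 : νR 0 = 0 ∨ νR 0 = n) (vRN : νR (n+n+1) = 0 ∨ νR (n+n+1) = n) :
    IsFaceSphere X x₀ (m+m+1) (n+n+1) (pw f m hL hR νL νR) := by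
  constructor
  · exact simp_of_contig (pw_contig hf HL HL HL HR HR HR VL VL VL VR VR VR sL sL sR sR)
  · intro p hp1 hp2 hb
    obtain ⟨i, j⟩ := p
    simp only at hp1 hp2 hb
    have hνL : νL j ≤ n :=
      (VL j j (Nat.zero_le _) hp2 (Nat.zero_le _) hp2 (by omega) (by omega)).1
    have hνR : νR j ≤ n :=
      (VR j j (Nat.zero_le _) hp2 (Nat.zero_le _) hp2 (by omega) (by omega)).1
    rcases hb with h | h | h | h
    · subst h
      show pw f m hL hR νL νR (0, j) = x₀
      simp only [pw, if_pos (Nat.zero_le m)]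
      exact bL0 _ hνL
    · subst h
      show pw f m hL hR νL νR (m+m+1, j) = x₀
      simp only [pw, if_neg (by omega : ¬ m + m + 1 ≤ m)]
      exact bRT _ hνR
    · subst h
      show pw f m hL hR νL νR (i, 0) = x₀
      by_cases hi : i ≤ m
      · simp only [pw, if_pos hi]
        have hφ : hL i ≤ m := (HL i i (Nat.zero_le _) hi (Nat.zero_le _) hi
          (by omega) (by omega)).1
        rcases vL0 with h2 | h2 <;> rw [h2] <;> exact hf.2 (hL i, _) hφ (by omega) (by simp)
      · simp only [pw, if_neg hi]
        have hφ : hR i ≤ m := (HR i i (by omega) hp1 (by omega) hp1 (by omega) (by omega)).1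
        rcases vR0 with h2 | h2 <;> rw [h2] <;> exact hf.2 (hR i, _) hφ (by omega) (by simp)
    · subst h
      show pw f m hL hR νL νR (i, n+n+1) = x₀
      by_cases hi : i ≤ m
      · simp only [pw, if_pos hi]
        have hφ : hL i ≤ m := (HL i i (Nat.zero_le _) hi (Nat.zero_le _) hi
          (by omega) (by omega)).1
        rcases vLN with h2 | h2 <;> rw [h2] <;> exact hf.2 (hL i, _) hφ (by omega) (by simp)
      · simp only [pw, if_neg hi]
        have hφ : hR i ≤ m := (HR i i (by omega) hp1 (by omega) hp1 (by omega) (by omega)).1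
        rcases vRN with h2 | h2 <;> rw [h2] <;> exact hf.2 (hR i, _) hφ (by omega) (by simp)

end FaceGroupAux
namespace FaceGroupAux

variable {V : Type} [DecidableEq V] {X : ASC V} {x₀ : V} {m n r s : ℕ}
  {f g : ℕ × ℕ → V}

lemma closure (hf : IsFaceSphere X x₀ m n f) (hg : IsFaceSphere X x₀ r s g) :
    IsFaceSphere X x₀ (m + r + 1) (n + s + 1) (fsMul x₀ m n f g) := by
  constructor
  · intro t ht
    by_cases hC1 : ∃ p ∈ t, p.1 < m ∧ p.2 < n
    · obtain ⟨p₀, hp₀, hp₀1, hp₀2⟩ := hC1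
      have hall : ∀ q ∈ t, q.1 ≤ m ∧ q.2 ≤ n := by
        intro q hq
        have := face_close ht q hq p₀ hp₀
        omega
      have himg : t.image (fsMul x₀ m n f g) = t.image f := by
        apply Finset.image_congr
        intro q hq
        simp only [fsMul, if_pos (hall q hq)]
      rw [himg]
      apply hf.1
      apply mk_face
      · exact hall
      · exact face_close ht
    · by_cases hC2 : ∃ p ∈ t, m + 1 < p.1 ∧ n + 1 < p.2
      · obtain ⟨p₀, hp₀, hp₀1, hp₀2⟩ := hC2
        have hall : ∀ q ∈ t, m + 1 ≤ q.1 ∧ n + 1 ≤ q.2 := by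
          intro q hq
          have := face_close ht p₀ hp₀ q hq
          omega
        have himg : t.image (fsMul x₀ m n f g)
            = (t.image (fun p => (p.1 - (m+1), p.2 - (n+1)))).image g := by
          rw [Finset.image_image]
          apply Finset.image_congr
          intro q hq
          have hq1 := (hall q hq).1
          have hq2 := (hall q hq).2
          simp only [fsMul, Function.comp]
          rw [if_neg (by omega), if_pos ⟨hq1, hq2⟩]
        rw [himg]
        apply hg.1
        apply mk_face
        · intro q hq
          obtain ⟨a, ha, rfl⟩ := Finset.mem_image.1 hq
          have h1 := face_bound ht a ha
          have h2 := hall a ha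
          simp only
          omega
        · intro q hq q' hq'
          obtain ⟨a, ha, rfl⟩ := Finset.mem_image.1 hq
          obtain ⟨b, hb, rfl⟩ := Finset.mem_image.1 hq'
          have h1 := face_close ht a ha b hb
          have h2 := hall a ha
          have h3 := hall b hb
          simp only
          omega
      · -- all values are x₀
        push_neg at hC1 hC2
        apply X.down_closed (singleton_face hf)
        intro x hx
        obtain ⟨q, hq, rfl⟩ := Finset.mem_image.1 hx
        obtain ⟨hq1, hq2⟩ := face_bound ht q hq
        have hval : fsMul x₀ m n f g q = x₀ := by
          by_cases h1 : q.1 ≤ m ∧ q.2 ≤ n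
          · simp only [fsMul, if_pos h1]
            have := hC1 q hq
            exact hf.2 q h1.1 h1.2 (by omega)
          · by_cases h2 : m + 1 ≤ q.1 ∧ n + 1 ≤ q.2
            · simp only [fsMul, if_neg h1, if_pos h2]
              have hc := hC2 q hq
              obtain ⟨h2a, h2b⟩ := h2
              exact hg.2 (q.1 - (m+1), q.2 - (n+1))
                (show q.1 - (m+1) ≤ r by omega) (show q.2 - (n+1) ≤ s by omega)
                (show q.1 - (m+1) = 0 ∨ q.1 - (m+1) = r ∨ q.2 - (n+1) = 0 ∨
                  q.2 - (n+1) = s by omega)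
            · simp only [fsMul, if_neg h1, if_neg h2]
        rw [hval]
        exact Finset.mem_singleton_self _
  · intro p hp1 hp2 hb
    obtain ⟨i, j⟩ := p
    simp only at hp1 hp2 hb
    show fsMul x₀ m n f g (i, j) = x₀
    by_cases h1 : i ≤ m ∧ j ≤ n
    · simp only [fsMul, if_pos h1]
      obtain ⟨h1a, h1b⟩ := h1
      exact hf.2 (i, j) h1a h1b (show i = 0 ∨ i = m ∨ j = 0 ∨ j = n by omega)
    · by_cases h2 : m + 1 ≤ i ∧ n + 1 ≤ j
      · simp only [fsMul, if_neg h1, if_pos h2]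
        obtain ⟨h2a, h2b⟩ := h2
        exact hg.2 (i - (m+1), j - (n+1))
          (show i - (m+1) ≤ r by omega) (show j - (n+1) ≤ s by omega)
          (show i - (m+1) = 0 ∨ i - (m+1) = r ∨ j - (n+1) = 0 ∨ j - (n+1) = s by omega)
      · simp only [fsMul, if_neg h1, if_neg h2]

end FaceGroupAux
namespace FaceGroupAux

/-! ### 1-dimensional reparametrization families -/

/-- Ramp: shift by `t`, clamped at `n`. -/
def nuF (n t : ℕ) : ℕ → ℕ := fun j => min (j - t) n

/-- Hybrid between `nuF n t` and `nuF n (t+1)`: use the lower ramp above height `c`. -/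
def chi (n t c : ℕ) : ℕ → ℕ := fun j =>
  if min (j - t) n ≤ c then min (j - t) n else min (j - (t+1)) n

def betaF (n : ℕ) : ℕ → ℕ := fun j => j - (n+1)

/-- Tent map on `[0, 2m+1]`. -/
def rhoT (m : ℕ) : ℕ → ℕ := fun i => if i ≤ m then i else m + m + 1 - i

/-- Valley map on `[0, 2m+1]`. -/
def rhoV (m : ℕ) : ℕ → ℕ := fun i => if i ≤ m then m - i else i - (m+1)

lemma cl_nu (n t : ℕ) : Cl n 0 (n+n+1) (nuF n t) (nuF n t) := by
  intro i i' _ _ _ _ h5 h6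
  simp only [nuF]
  omega

lemma cl_chi {n t c c' : ℕ} (hc : c ≤ c' + 1) (hc' : c' ≤ c + 1) :
    Cl n 0 (n+n+1) (chi n t c) (chi n t c') := by
  intro i i' _ _ _ _ h5 h6
  simp only [chi]
  split_ifs <;> omega

lemma cl_beta (n : ℕ) : Cl n 0 (n+n+1) (betaF n) (betaF n) := by
  intro i i' _ h2 _ h4 h5 h6
  simp only [betaF]
  omega

lemma cl_id (m : ℕ) : Cl m 0 m (fun i => i) (fun i => i) := by
  intro i i' _ h2 _ h4 h5 h6
  show i ≤ m ∧ i' ≤ m ∧ i ≤ i' + 1 ∧ i' ≤ i + 1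
  omega

lemma cl_sub (m : ℕ) : Cl m 0 m (fun i => m - i) (fun i => m - i) := by
  intro i i' _ h2 _ h4 h5 h6
  show m - i ≤ m ∧ m - i' ≤ m ∧ m - i ≤ m - i' + 1 ∧ m - i' ≤ m - i + 1
  omega

lemma cl_revR (m : ℕ) : Cl m (m+1) (m+m+1) (fun i => m+m+1 - i) (fun i => m+m+1 - i) := by
  intro i i' h1 h2 h3 h4 h5 h6
  show m+m+1 - i ≤ m ∧ m+m+1 - i' ≤ m ∧ m+m+1 - i ≤ m+m+1 - i' + 1 ∧
    m+m+1 - i' ≤ m+m+1 - i + 1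
  omega

lemma cl_subR (m : ℕ) : Cl m (m+1) (m+m+1) (fun i => i - (m+1)) (fun i => i - (m+1)) := by
  intro i i' h1 h2 h3 h4 h5 h6
  show i - (m+1) ≤ m ∧ i' - (m+1) ≤ m ∧ i - (m+1) ≤ i' - (m+1) + 1 ∧
    i' - (m+1) ≤ i - (m+1) + 1
  omega

lemma cl_rho_min {m c c' : ℕ} (hc : c ≤ c' + 1) (hc' : c' ≤ c + 1) :
    Cl m 0 (m+m+1) (fun i => min (rhoT m i) c) (fun i => min (rhoT m i) c') := by
  intro i i' h1 h2 h3 h4 h5 h6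
  show min (rhoT m i) c ≤ m ∧ min (rhoT m i') c' ≤ m ∧
    min (rhoT m i) c ≤ min (rhoT m i') c' + 1 ∧ min (rhoT m i') c' ≤ min (rhoT m i) c + 1
  simp only [rhoT]
  split_ifs <;> omega

lemma cl_rho_max {m c c' : ℕ} (hcm : c ≤ m) (hcm' : c' ≤ m) (hc : c ≤ c' + 1)
    (hc' : c' ≤ c + 1) :
    Cl m 0 (m+m+1) (fun i => max (rhoV m i) c) (fun i => max (rhoV m i) c') := by
  intro i i' h1 h2 h3 h4 h5 h6
  show max (rhoV m i) c ≤ m ∧ max (rhoV m i') c' ≤ m ∧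
    max (rhoV m i) c ≤ max (rhoV m i') c' + 1 ∧ max (rhoV m i') c' ≤ max (rhoV m i) c + 1
  simp only [rhoV]
  split_ifs <;> omega

lemma chi_zero (n t c : ℕ) : chi n t c 0 = 0 := by
  simp only [chi]
  split_ifs <;> omega

lemma chi_top {n t : ℕ} (c : ℕ) (ht : t ≤ n) : chi n t c (n+n+1) = n := by
  simp only [chi]
  split_ifs <;> omega

lemma nu_zero (n t : ℕ) : nuF n t 0 = 0 := by
  simp only [nuF]; omega

lemma nu_top {n t : ℕ} (ht : t ≤ n + 1) : nuF n t (n+n+1) = n := by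
  simp only [nuF]; omega

lemma beta_zero (n : ℕ) : betaF n 0 = 0 := by
  simp only [betaF]; omega

lemma beta_top (n : ℕ) : betaF n (n+n+1) = n := by
  simp only [betaF]; omega

lemma chi_n (n t : ℕ) : chi n t n = nuF n t := by
  funext j
  simp only [chi, nuF]
  split_ifs <;> omega

lemma chi_0 (n t : ℕ) : chi n t 0 = nuF n (t+1) := by
  funext j
  simp only [chi, nuF]
  split_ifs <;> omega

end FaceGroupAux
namespace FaceGroupAux

variable {V : Type} [DecidableEq V] {X : ASC V} {x₀ : V} {m n : ℕ} {f : ℕ × ℕ → V}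

/-- Stage 1: sweep the vertical reparametrization of the left half from
`nuF n 0` to `nuF n (n+1)`, keeping the right half fixed. -/
lemma sweep (hf : IsFaceSphere X x₀ m n f) {hL hR : ℕ → ℕ}
    (HL : Cl m 0 m hL hL) (HR : Cl m (m+1) (m+m+1) hR hR)
    (sL : ∀ q ≤ n, f (hL m, q) = x₀) (sR : ∀ q ≤ n, f (hR (m+1), q) = x₀)
    (bL0 : ∀ q ≤ n, f (hL 0, q) = x₀) (bRT : ∀ q ≤ n, f (hR (m+m+1), q) = x₀) :
    FaceContigEquiv X x₀ (m+m+1) (n+n+1) (pw f m hL hR (nuF n 0) (betaF n))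
      (pw f m hL hR (nuF n (n+1)) (betaF n)) := by
  have face_chi : ∀ t c : ℕ, t ≤ n →
      IsFaceSphere X x₀ (m+m+1) (n+n+1) (pw f m hL hR (chi n t c) (betaF n)) := by
    intro t c ht
    exact pw_face hf HL HR (cl_chi (by omega) (by omega)) (cl_beta n) sL sR bL0 bRT
      (Or.inl (chi_zero n t c)) (Or.inr (chi_top c ht))
      (Or.inl (beta_zero n)) (Or.inr (beta_top n))
  have step : ∀ t c : ℕ, t ≤ n →
      FaceContigEquiv X x₀ (m+m+1) (n+n+1) (pw f m hL hR (chi n t (c+1)) (betaF n))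
        (pw f m hL hR (chi n t c) (betaF n)) := by
    intro t c ht
    exact fce_step (face_chi t (c+1) ht) (face_chi t c ht)
      (pw_contig hf HL HL HL HR HR HR
        (cl_chi (by omega) (by omega)) (cl_chi (by omega) (by omega))
        (cl_chi (by omega) (by omega))
        (cl_beta n) (cl_beta n) (cl_beta n) sL sL sR sR)
  have inner : ∀ t : ℕ, t ≤ n → ∀ c : ℕ,
      FaceContigEquiv X x₀ (m+m+1) (n+n+1) (pw f m hL hR (chi n t c) (betaF n))
        (pw f m hL hR (chi n t 0) (betaF n)) := by
    intro t ht c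
    induction c with
    | zero => exact Relation.ReflTransGen.refl
    | succ c ih => exact fce_trans (step t c ht) ih
  have slide : ∀ t : ℕ, t ≤ n →
      FaceContigEquiv X x₀ (m+m+1) (n+n+1) (pw f m hL hR (nuF n t) (betaF n))
        (pw f m hL hR (nuF n (t+1)) (betaF n)) := by
    intro t ht
    have := inner t ht n
    rwa [chi_n, chi_0] at this
  have outer : ∀ t : ℕ, t ≤ n + 1 →
      FaceContigEquiv X x₀ (m+m+1) (n+n+1) (pw f m hL hR (nuF n 0) (betaF n))
        (pw f m hL hR (nuF n t) (betaF n)) := by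
    intro t
    induction t with
    | zero => intro _; exact Relation.ReflTransGen.refl
    | succ t ih => intro ht; exact fce_trans (ih (by omega)) (slide t (by omega))
  exact outer (n+1) (le_refl _)

end FaceGroupAux
namespace FaceGroupAux

variable {V : Type} [DecidableEq V] {X : ASC V} {x₀ : V} {m n : ℕ} {f : ℕ × ℕ → V}

lemma tilde_face (hf : IsFaceSphere X x₀ m n f) :
    IsFaceSphere X x₀ m n (fun p => f (m - p.1, p.2)) := by
  have := faceSphere_close (M := m) (N := n) hf (φ := fun i => m - i) (ν := fun j => j)
    (cl_sub m) (cl_id n)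
    (fun q hq => by
      show f (m - 0, q) = x₀
      have e : m - 0 = m := by omega
      rw [e]; exact hf.2 (m, q) (le_refl _) hq (by simp))
    (fun q hq => by
      show f (m - m, q) = x₀
      have e : m - m = 0 := by omega
      rw [e]; exact hf.2 (0, q) (Nat.zero_le _) hq (by simp))
    (Or.inl rfl) (Or.inr rfl)
  exact this

lemma collapse1 (hf : IsFaceSphere X x₀ m n f) :
    FaceContigEquiv X x₀ (m+m+1) (n+n+1)
      (pw f m (fun i => i) (fun i => m+m+1 - i) (nuF n (n+1)) (betaF n))
      (fun _ => x₀) := by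
  have faceT : ∀ c : ℕ, IsFaceSphere X x₀ (m+m+1) (n+n+1)
      (fun p : ℕ × ℕ => f (min (rhoT m p.1) c, nuF n (n+1) p.2)) := by
    intro c
    refine faceSphere_close hf (cl_rho_min (by omega) (by omega)) (cl_nu n (n+1))
      ?_ ?_ (Or.inl (nu_zero n (n+1))) (Or.inr (nu_top (by omega)))
    · intro q hq
      have e : min (rhoT m 0) c = 0 := by
        simp only [rhoT]; split_ifs <;> omega
      show f (min (rhoT m 0) c, q) = x₀
      rw [e]; exact hf.2 (0, q) (Nat.zero_le _) hq (by simp)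
    · intro q hq
      have e : min (rhoT m (m+m+1)) c = 0 := by
        simp only [rhoT]; split_ifs <;> omega
      show f (min (rhoT m (m+m+1)) c, q) = x₀
      rw [e]; exact hf.2 (0, q) (Nat.zero_le _) hq (by simp)
  have chainT : ∀ c : ℕ,
      FaceContigEquiv X x₀ (m+m+1) (n+n+1)
        (fun p : ℕ × ℕ => f (min (rhoT m p.1) c, nuF n (n+1) p.2))
        (fun p : ℕ × ℕ => f (min (rhoT m p.1) 0, nuF n (n+1) p.2)) := by
    intro c
    induction c with
    | zero => exact Relation.ReflTransGen.refl
    | succ c ih =>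
      refine fce_trans (fce_step (faceT (c+1)) (faceT c) ?_) ih
      exact contig_close hf.1 (cl_rho_min (by omega) (by omega))
        (cl_rho_min (by omega) (by omega)) (cl_rho_min (by omega) (by omega))
        (cl_nu n (n+1)) (cl_nu n (n+1)) (cl_nu n (n+1))
  have hpwface : IsFaceSphere X x₀ (m+m+1) (n+n+1)
      (pw f m (fun i => i) (fun i => m+m+1 - i) (nuF n (n+1)) (betaF n)) := by
    refine pw_face hf (cl_id m) (cl_revR m) (cl_nu n (n+1)) (cl_beta n)
      (fun q hq => hf.2 (m, q) (le_refl _) hq (by simp))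
      (fun q hq => by
        show f (m+m+1 - (m+1), q) = x₀
        have e : m+m+1 - (m+1) = m := by omega
        rw [e]; exact hf.2 (m, q) (le_refl _) hq (by simp))
      (fun q hq => hf.2 (0, q) (Nat.zero_le _) hq (Or.inl rfl))
      (fun q hq => by
        show f (m+m+1 - (m+m+1), q) = x₀
        have e : m+m+1 - (m+m+1) = 0 := by omega
        rw [e]; exact hf.2 (0, q) (Nat.zero_le _) hq (Or.inl rfl))
      (Or.inl (nu_zero n (n+1))) (Or.inr (nu_top (by omega)))
      (Or.inl (beta_zero n)) (Or.inr (beta_top n))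
  have hbr := bridge (X := X) (x₀ := x₀) hpwface
    (B := fun p : ℕ × ℕ => f (min (rhoT m p.1) m, nuF n (n+1) p.2)) ?_
  swap
  · intro p h1 h2
    obtain ⟨i, j⟩ := p
    simp only at h1 h2
    show (if i ≤ m then f (i, nuF n (n+1) j) else f (m+m+1 - i, betaF n j))
      = f (min (rhoT m i) m, nuF n (n+1) j)
    by_cases hi : i ≤ m
    · rw [if_pos hi]
      have e : min (rhoT m i) m = i := by simp only [rhoT]; split_ifs <;> omega
      rw [e]
    · rw [if_neg hi]
      have e : min (rhoT m i) m = m+m+1 - i := by simp only [rhoT]; split_ifs <;> omega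
      have e2 : nuF n (n+1) j = betaF n j := by simp only [nuF, betaF]; omega
      rw [e, e2]
  have Tzero : (fun p : ℕ × ℕ => f (min (rhoT m p.1) 0, nuF n (n+1) p.2))
      = fun _ => x₀ := by
    funext p
    show f (min (rhoT m p.1) 0, nuF n (n+1) p.2) = x₀
    have e : min (rhoT m p.1) 0 = 0 := Nat.min_zero _
    rw [e]
    exact hf.2 (0, nuF n (n+1) p.2) (Nat.zero_le _) (Nat.min_le_right _ _) (Or.inl rfl)
  exact fce_trans hbr.2.2 (Tzero ▸ chainT m)

lemma inv_right (hf : IsFaceSphere X x₀ m n f) :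
    FaceContigEquiv X x₀ (m+m+1) (n+n+1)
      (fsMul x₀ m n f (fun p => f (m - p.1, p.2))) (fun _ => x₀) := by
  have hEq : fsMul x₀ m n f (fun p => f (m - p.1, p.2))
      = pw f m (fun i => i) (fun i => m+m+1 - i) (nuF n 0) (betaF n) := by
    funext p
    obtain ⟨i, j⟩ := p
    show (if i ≤ m ∧ j ≤ n then f (i, j)
        else if m + 1 ≤ i ∧ n + 1 ≤ j then f (m - (i - (m+1)), j - (n+1)) else x₀)
      = if i ≤ m then f (i, nuF n 0 j) else f (m+m+1 - i, betaF n j)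
    by_cases hi : i ≤ m
    · rw [if_pos hi]
      by_cases hj : j ≤ n
      · rw [if_pos ⟨hi, hj⟩]
        have e : nuF n 0 j = j := by simp only [nuF]; omega
        rw [e]
      · rw [if_neg (by tauto), if_neg (by omega)]
        have e : nuF n 0 j = n := by simp only [nuF]; omega
        rw [e]
        exact (hf.2 (i, n) hi (le_refl _) (by simp)).symm
    · rw [if_neg hi, if_neg (fun h => hi h.1)]
      by_cases hj : n + 1 ≤ j
      · rw [if_pos ⟨by omega, hj⟩]
        have e : m - (i - (m+1)) = m+m+1 - i := by omega
        rw [e]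
        rfl
      · rw [if_neg (by tauto)]
        have hb : betaF n j = 0 := by simp only [betaF]; omega
        rw [hb]
        exact (hf.2 (m+m+1 - i, 0) (by omega) (Nat.zero_le _) (by simp)).symm
  rw [hEq]
  refine fce_trans (sweep hf (cl_id m) (cl_revR m)
    (fun q hq => hf.2 (m, q) (le_refl _) hq (by simp))
    (fun q hq => by
      show f (m+m+1 - (m+1), q) = x₀
      have e : m+m+1 - (m+1) = m := by omega
      rw [e]; exact hf.2 (m, q) (le_refl _) hq (by simp))
    (fun q hq => hf.2 (0, q) (Nat.zero_le _) hq (Or.inl rfl))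
    (fun q hq => by
      show f (m+m+1 - (m+m+1), q) = x₀
      have e : m+m+1 - (m+m+1) = 0 := by omega
      rw [e]; exact hf.2 (0, q) (Nat.zero_le _) hq (Or.inl rfl))) (collapse1 hf)

end FaceGroupAux
namespace FaceGroupAux

variable {V : Type} [DecidableEq V] {X : ASC V} {x₀ : V} {m n : ℕ} {f : ℕ × ℕ → V}

set_option maxHeartbeats 2000000 in
lemma collapse2 (hf : IsFaceSphere X x₀ m n f) :
    FaceContigEquiv X x₀ (m+m+1) (n+n+1)
      (pw f m (fun i => m - i) (fun i => i - (m+1)) (nuF n (n+1)) (betaF n))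
      (fun _ => x₀) := by
  have faceS : ∀ c : ℕ, c ≤ m → IsFaceSphere X x₀ (m+m+1) (n+n+1)
      (fun p : ℕ × ℕ => f (max (rhoV m p.1) c, nuF n (n+1) p.2)) := by
    intro c hc
    refine faceSphere_close hf (cl_rho_max hc hc (by omega) (by omega)) (cl_nu n (n+1))
      ?_ ?_ (Or.inl (nu_zero n (n+1))) (Or.inr (nu_top (by omega)))
    · intro q hq
      have e : max (rhoV m 0) c = m := by
        simp only [rhoV]; split_ifs <;> omega
      show f (max (rhoV m 0) c, q) = x₀
      rw [e]; exact hf.2 (m, q) (le_refl _) hq (by simp)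
    · intro q hq
      have e : max (rhoV m (m+m+1)) c = m := by
        simp only [rhoV]; split_ifs <;> omega
      show f (max (rhoV m (m+m+1)) c, q) = x₀
      rw [e]; exact hf.2 (m, q) (le_refl _) hq (by simp)
  have chainS : ∀ c : ℕ, c ≤ m →
      FaceContigEquiv X x₀ (m+m+1) (n+n+1)
        (fun p : ℕ × ℕ => f (max (rhoV m p.1) 0, nuF n (n+1) p.2))
        (fun p : ℕ × ℕ => f (max (rhoV m p.1) c, nuF n (n+1) p.2)) := by
    intro c
    induction c with
    | zero => intro _; exact Relation.ReflTransGen.refl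
    | succ c ih =>
      intro hc
      refine fce_trans (ih (by omega)) (fce_step (faceS c (by omega)) (faceS (c+1) hc) ?_)
      exact contig_close hf.1 (cl_rho_max (by omega) (by omega) (by omega) (by omega))
        (cl_rho_max hc hc (by omega) (by omega))
        (cl_rho_max (by omega) hc (by omega) (by omega))
        (cl_nu n (n+1)) (cl_nu n (n+1)) (cl_nu n (n+1))
  have hpwface : IsFaceSphere X x₀ (m+m+1) (n+n+1)
      (pw f m (fun i => m - i) (fun i => i - (m+1)) (nuF n (n+1)) (betaF n)) := by
    refine pw_face hf (cl_sub m) (cl_subR m) (cl_nu n (n+1)) (cl_beta n)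
      (fun q hq => by
        show f (m - m, q) = x₀
        have e : m - m = 0 := by omega
        rw [e]; exact hf.2 (0, q) (Nat.zero_le _) hq (by simp))
      (fun q hq => by
        show f (m + 1 - (m+1), q) = x₀
        have e : m + 1 - (m+1) = 0 := by omega
        rw [e]; exact hf.2 (0, q) (Nat.zero_le _) hq (by simp))
      (fun q hq => by
        show f (m - 0, q) = x₀
        have e : m - 0 = m := by omega
        rw [e]; exact hf.2 (m, q) (le_refl _) hq (by simp))
      (fun q hq => by
        show f (m+m+1 - (m+1), q) = x₀
        have e : m+m+1 - (m+1) = m := by omega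
        rw [e]; exact hf.2 (m, q) (le_refl _) hq (by simp))
      (Or.inl (nu_zero n (n+1))) (Or.inr (nu_top (by omega)))
      (Or.inl (beta_zero n)) (Or.inr (beta_top n))
  have hbr := bridge (X := X) (x₀ := x₀) hpwface
    (B := fun p : ℕ × ℕ => f (max (rhoV m p.1) 0, nuF n (n+1) p.2)) ?_
  swap
  · intro p h1 h2
    obtain ⟨i, j⟩ := p
    simp only at h1 h2
    show (if i ≤ m then f (m - i, nuF n (n+1) j) else f (i - (m+1), betaF n j))
      = f (max (rhoV m i) 0, nuF n (n+1) j)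
    by_cases hi : i ≤ m
    · rw [if_pos hi]
      have e : max (rhoV m i) 0 = m - i := by simp only [rhoV]; split_ifs <;> omega
      rw [e]
    · rw [if_neg hi]
      have e : max (rhoV m i) 0 = i - (m+1) := by simp only [rhoV]; split_ifs <;> omega
      have e2 : nuF n (n+1) j = betaF n j := by simp only [nuF, betaF]; omega
      rw [e, e2]
  have hbr2 := bridge (X := X) (x₀ := x₀) (faceS m (le_refl _)) (B := fun _ => x₀) ?_
  swap
  · intro p h1 h2
    show f (max (rhoV m p.1) m, nuF n (n+1) p.2) = x₀
    have e : max (rhoV m p.1) m = m := by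
      simp only [rhoV]; split_ifs <;> omega
    rw [e]
    exact hf.2 (m, nuF n (n+1) p.2) (le_refl _) (Nat.min_le_right _ _) (by simp)
  exact fce_trans hbr.2.2 (fce_trans (chainS m (le_refl _)) hbr2.2.2)

set_option maxHeartbeats 2000000 in
lemma inv_left (hf : IsFaceSphere X x₀ m n f) :
    FaceContigEquiv X x₀ (m+m+1) (n+n+1)
      (fsMul x₀ m n (fun p => f (m - p.1, p.2)) f) (fun _ => x₀) := by
  have hA : IsFaceSphere X x₀ (m+m+1) (n+n+1)
      (fsMul x₀ m n (fun p => f (m - p.1, p.2)) f) := by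
    have := closure (tilde_face hf) hf
    exact this
  have hbr := bridge (X := X) (x₀ := x₀) hA
    (B := pw f m (fun i => m - i) (fun i => i - (m+1)) (nuF n 0) (betaF n)) ?_
  swap
  · intro p h1 h2
    obtain ⟨i, j⟩ := p
    simp only at h1 h2
    show (if i ≤ m ∧ j ≤ n then f (m - i, j)
        else if m + 1 ≤ i ∧ n + 1 ≤ j then f (i - (m+1), j - (n+1)) else x₀)
      = if i ≤ m then f (m - i, nuF n 0 j) else f (i - (m+1), betaF n j)
    by_cases hi : i ≤ m
    · rw [if_pos hi]
      by_cases hj : j ≤ n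
      · rw [if_pos ⟨hi, hj⟩]
        have e : nuF n 0 j = j := by simp only [nuF]; omega
        rw [e]
      · rw [if_neg (by tauto), if_neg (by omega)]
        have e : nuF n 0 j = n := by simp only [nuF]; omega
        rw [e]
        exact (hf.2 (m - i, n) (by omega) (le_refl _) (by simp)).symm
    · rw [if_neg hi, if_neg (fun h => hi h.1)]
      by_cases hj : n + 1 ≤ j
      · rw [if_pos ⟨by omega, hj⟩]
        rfl
      · rw [if_neg (by tauto)]
        have hb : betaF n j = 0 := by simp only [betaF]; omega
        rw [hb]
        exact (hf.2 (i - (m+1), 0) (by omega) (Nat.zero_le _) (by simp)).symm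
  refine fce_trans hbr.2.2 (fce_trans (sweep hf (cl_sub m) (cl_subR m)
    (fun q hq => by
      show f (m - m, q) = x₀
      have e : m - m = 0 := by omega
      rw [e]; exact hf.2 (0, q) (Nat.zero_le _) hq (by simp))
    (fun q hq => by
      show f (m + 1 - (m+1), q) = x₀
      have e : m + 1 - (m+1) = 0 := by omega
      rw [e]; exact hf.2 (0, q) (Nat.zero_le _) hq (by simp))
    (fun q hq => by
      show f (m - 0, q) = x₀
      have e : m - 0 = m := by omega
      rw [e]; exact hf.2 (m, q) (le_refl _) hq (by simp))
    (fun q hq => by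
      show f (m+m+1 - (m+1), q) = x₀
      have e : m+m+1 - (m+1) = m := by omega
      rw [e]; exact hf.2 (m, q) (le_refl _) hq (by simp))) (collapse2 hf))

end FaceGroupAux
namespace FaceGroupAux

variable {V : Type} [DecidableEq V] {X : ASC V} {x₀ : V} {m n : ℕ} {f : ℕ × ℕ → V}

lemma trivExt_zero (a b : ℕ) (h : ℕ × ℕ → V) : trivExt a b 0 0 h = h := by
  funext p
  rfl

lemma trivExt_const (a b r s : ℕ) :
    trivExt a b r s (fun _ => (x₀ : V)) = fun _ => x₀ := rfl

lemma trivExt_one : trivExt m n 1 1 f = fun p => f (alpha m p.1, alpha n p.2) := by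
  funext p
  rfl

lemma cl_alpha (m : ℕ) : Cl m 0 (m+1) (alpha m) (alpha m) := by
  intro i i' h1 h2 h3 h4 h5 h6
  show alpha m i ≤ m ∧ alpha m i' ≤ m ∧ alpha m i ≤ alpha m i' + 1 ∧ alpha m i' ≤ alpha m i + 1
  simp only [alpha]
  split_ifs <;> omega

/-- Interpolation between shift (`k = 0`) and clamp (`k = m`). -/
def muF (m k : ℕ) : ℕ → ℕ := fun i => min (if i ≤ k then i else i - 1) m

lemma cl_mu {m k k' : ℕ} (h : k ≤ k' + 1) (h' : k' ≤ k + 1) :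
    Cl m 0 (m+1) (muF m k) (muF m k') := by
  intro i i' h1 h2 h3 h4 h5 h6
  show muF m k i ≤ m ∧ muF m k' i' ≤ m ∧ muF m k i ≤ muF m k' i' + 1 ∧
    muF m k' i' ≤ muF m k i + 1
  simp only [muF]
  split_ifs <;> omega

lemma mu_zero (m k : ℕ) : muF m k 0 = 0 := by
  simp only [muF]; split_ifs <;> omega

lemma mu_top (m k : ℕ) : muF m k (m+1) = m := by
  simp only [muF]; split_ifs <;> omega

lemma mu_m_eq (m : ℕ) : muF m m = fun i => min i m := by
  funext i
  simp only [muF]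
  split_ifs <;> omega

lemma const_face (hf : IsFaceSphere X x₀ m n f) (a b : ℕ) :
    IsFaceSphere X x₀ a b (fun _ => (x₀ : V)) := by
  constructor
  · intro s hs
    apply X.down_closed (singleton_face hf)
    intro x hx
    obtain ⟨q, hq, rfl⟩ := Finset.mem_image.1 hx
    exact Finset.mem_singleton_self _
  · intro p _ _ _
    rfl

/-- The map used for the identity chains. -/
lemma faceM (hf : IsFaceSphere X x₀ m n f) (k k' : ℕ) :
    IsFaceSphere X x₀ (m+1) (n+1)
      (fun p : ℕ × ℕ => f (muF m k p.1, muF n k' p.2)) := by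
  refine faceSphere_close hf (cl_mu (by omega) (by omega)) (cl_mu (by omega) (by omega))
    ?_ ?_ (Or.inl (mu_zero n k')) (Or.inr (mu_top n k'))
  · intro q hq
    show f (muF m k 0, q) = x₀
    rw [mu_zero]
    exact hf.2 (0, q) (Nat.zero_le _) hq (Or.inl rfl)
  · intro q hq
    show f (muF m k (m+1), q) = x₀
    rw [mu_top]
    exact hf.2 (m, q) (le_refl _) hq (by simp)

lemma id_right (hf : IsFaceSphere X x₀ m n f) :
    FaceContigEquiv X x₀ (m+1) (n+1) (fsMul x₀ m n f (fun _ => x₀))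
      (trivExt m n 1 1 f) := by
  have hT : IsFaceSphere X x₀ (m+1) (n+1)
      (fun p : ℕ × ℕ => f (alpha m p.1, alpha n p.2)) := by
    refine faceSphere_close hf (cl_alpha m) (cl_alpha n) ?_ ?_ ?_ ?_
    · intro q hq
      show f (alpha m 0, q) = x₀
      have e : alpha m 0 = 0 := by simp [alpha]
      rw [e]; exact hf.2 (0, q) (Nat.zero_le _) hq (Or.inl rfl)
    · intro q hq
      show f (alpha m (m+1), q) = x₀
      have e : alpha m (m+1) = m := by simp only [alpha]; split_ifs <;> omega
      rw [e]; exact hf.2 (m, q) (le_refl _) hq (by simp)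
    · exact Or.inl (by simp [alpha])
    · refine Or.inr ?_
      show alpha n (n+1) = n
      simp only [alpha]; split_ifs <;> omega
  have hbr := bridge (X := X) (x₀ := x₀) hT (B := fsMul x₀ m n f (fun _ => x₀)) ?_
  swap
  · intro p h1 h2
    obtain ⟨i, j⟩ := p
    simp only at h1 h2
    show f (alpha m i, alpha n j)
      = (if i ≤ m ∧ j ≤ n then f (i, j) else if m + 1 ≤ i ∧ n + 1 ≤ j then x₀ else x₀)
    by_cases hi : i ≤ m <;> by_cases hj : j ≤ n
    · rw [if_pos ⟨hi, hj⟩]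
      have e1 : alpha m i = i := by simp only [alpha]; split_ifs <;> omega
      have e2 : alpha n j = j := by simp only [alpha]; split_ifs <;> omega
      rw [e1, e2]
    · rw [if_neg (by tauto)]
      have e2 : alpha n j = n := by simp only [alpha]; split_ifs <;> omega
      have e1 : alpha m i ≤ m := by simp only [alpha]; split_ifs <;> omega
      rw [e2]
      split_ifs <;> exact hf.2 (alpha m i, n) e1 (le_refl _) (by simp)
    · rw [if_neg (by tauto)]
      have e1 : alpha m i = m := by simp only [alpha]; split_ifs <;> omega
      have e2 : alpha n j ≤ n := by simp only [alpha]; split_ifs <;> omega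
      rw [e1]
      split_ifs <;> exact hf.2 (m, alpha n j) (le_refl _) e2 (by simp)
    · rw [if_neg (by tauto)]
      have e1 : alpha m i = m := by simp only [alpha]; split_ifs <;> omega
      have e2 : alpha n j ≤ n := by simp only [alpha]; split_ifs <;> omega
      rw [e1]
      split_ifs <;> exact hf.2 (m, alpha n j) (le_refl _) e2 (by simp)
  rw [trivExt_one]
  exact hbr.2.1

set_option maxHeartbeats 2000000 in
lemma id_left (hf : IsFaceSphere X x₀ m n f) :
    FaceContigEquiv X x₀ (m+1) (n+1) (fsMul x₀ 0 0 (fun _ => x₀) f)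
      (trivExt m n 1 1 f) := by
  have hA : IsFaceSphere X x₀ (m+1) (n+1) (fsMul x₀ 0 0 (fun _ => x₀) f) := by
    have := closure (const_face hf 0 0) hf
    simpa using this
  -- initial bridge to `map (muF m 0) (muF n 0)`
  have hbr0 := bridge (X := X) (x₀ := x₀) hA
    (B := fun p : ℕ × ℕ => f (muF m 0 p.1, muF n 0 p.2)) ?_
  swap
  · intro p h1 h2
    obtain ⟨i, j⟩ := p
    simp only at h1 h2
    show (if i ≤ 0 ∧ j ≤ 0 then x₀ else if 1 ≤ i ∧ 1 ≤ j then f (i - 1, j - 1) else x₀)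
      = f (muF m 0 i, muF n 0 j)
    have hb1 : muF m 0 i ≤ m := by simp only [muF]; split_ifs <;> omega
    have hb2 : muF n 0 j ≤ n := by simp only [muF]; split_ifs <;> omega
    by_cases hi : 1 ≤ i <;> by_cases hj : 1 ≤ j
    · rw [if_neg (by omega), if_pos ⟨hi, hj⟩]
      have e1 : muF m 0 i = i - 1 := by simp only [muF]; split_ifs <;> omega
      have e2 : muF n 0 j = j - 1 := by simp only [muF]; split_ifs <;> omega
      rw [e1, e2]
    · have e2 : muF n 0 j = 0 := by simp only [muF]; split_ifs <;> omega
      rw [e2]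
      have : f (muF m 0 i, 0) = x₀ := hf.2 (muF m 0 i, 0) hb1 (Nat.zero_le _) (by simp)
      rw [this]
      split_ifs <;> first | rfl | omega
    · have e1 : muF m 0 i = 0 := by simp only [muF]; split_ifs <;> omega
      rw [e1]
      have : f (0, muF n 0 j) = x₀ := hf.2 (0, muF n 0 j) (Nat.zero_le _) hb2 (Or.inl rfl)
      rw [this]
      split_ifs <;> first | rfl | omega
    · have e1 : muF m 0 i = 0 := by simp only [muF]; split_ifs <;> omega
      rw [e1]
      have : f (0, muF n 0 j) = x₀ := hf.2 (0, muF n 0 j) (Nat.zero_le _) hb2 (Or.inl rfl)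
      rw [this]
      split_ifs <;> first | rfl | omega
  -- horizontal chain
  have chainH : ∀ k : ℕ,
      FaceContigEquiv X x₀ (m+1) (n+1)
        (fun p : ℕ × ℕ => f (muF m 0 p.1, muF n 0 p.2))
        (fun p : ℕ × ℕ => f (muF m k p.1, muF n 0 p.2)) := by
    intro k
    induction k with
    | zero => exact Relation.ReflTransGen.refl
    | succ k ih =>
      refine fce_trans ih (fce_step (faceM hf k 0) (faceM hf (k+1) 0) ?_)
      exact contig_close hf.1 (cl_mu (by omega) (by omega)) (cl_mu (by omega) (by omega))
        (cl_mu (by omega) (by omega)) (cl_mu (by omega) (by omega))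
        (cl_mu (by omega) (by omega)) (cl_mu (by omega) (by omega))
  -- vertical chain
  have chainV : ∀ k : ℕ,
      FaceContigEquiv X x₀ (m+1) (n+1)
        (fun p : ℕ × ℕ => f (muF m m p.1, muF n 0 p.2))
        (fun p : ℕ × ℕ => f (muF m m p.1, muF n k p.2)) := by
    intro k
    induction k with
    | zero => exact Relation.ReflTransGen.refl
    | succ k ih =>
      refine fce_trans ih (fce_step (faceM hf m k) (faceM hf m (k+1)) ?_)
      exact contig_close hf.1 (cl_mu (by omega) (by omega)) (cl_mu (by omega) (by omega))
        (cl_mu (by omega) (by omega)) (cl_mu (by omega) (by omega))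
        (cl_mu (by omega) (by omega)) (cl_mu (by omega) (by omega))
  -- final bridge to the trivial extension
  have hbrE := bridge (X := X) (x₀ := x₀) (faceM hf m n)
    (B := fun p : ℕ × ℕ => f (alpha m p.1, alpha n p.2)) ?_
  swap
  · intro p h1 h2
    obtain ⟨i, j⟩ := p
    simp only at h1 h2
    show f (muF m m i, muF n n j) = f (alpha m i, alpha n j)
    have e1 : muF m m i = alpha m i := by
      simp only [muF, alpha]; split_ifs <;> omega
    have e2 : muF n n j = alpha n j := by
      simp only [muF, alpha]; split_ifs <;> omega
    rw [e1, e2]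
  rw [trivExt_one]
  exact fce_trans hbr0.2.2 (fce_trans (chainH m) (fce_trans (chainV n) hbrE.2.2))

end FaceGroupAux
namespace FaceGroupAux

variable {V : Type} [DecidableEq V]

set_option maxHeartbeats 2000000 in
lemma assoc_eq (x₀ : V) (m n r s : ℕ) (f g h : ℕ × ℕ → V) :
    fsMul x₀ (m+r+1) (n+s+1) (fsMul x₀ m n f g) h
      = fsMul x₀ m n f (fsMul x₀ r s g h) := by
  funext p
  obtain ⟨i, j⟩ := p
  show (if i ≤ m+r+1 ∧ j ≤ n+s+1 then
        (if i ≤ m ∧ j ≤ n then f (i, j)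
          else if m+1 ≤ i ∧ n+1 ≤ j then g (i-(m+1), j-(n+1)) else x₀)
      else if m+r+1+1 ≤ i ∧ n+s+1+1 ≤ j then h (i-(m+r+1+1), j-(n+s+1+1)) else x₀)
    = (if i ≤ m ∧ j ≤ n then f (i, j)
      else if m+1 ≤ i ∧ n+1 ≤ j then
        (if i-(m+1) ≤ r ∧ j-(n+1) ≤ s then g (i-(m+1), j-(n+1))
          else if r+1 ≤ i-(m+1) ∧ s+1 ≤ j-(n+1) then
            h (i-(m+1)-(r+1), j-(n+1)-(s+1)) else x₀)
      else x₀)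
  split_ifs <;> first
    | rfl
    | omega
    | (congr 1; simp only [Prod.mk.injEq]; constructor <;> omega)

end FaceGroupAux

open FaceGroupAux

/-- `F(X, x₀)` is a group: the product of face spheres is a face
sphere, it is associative up to extension-contiguity equivalence, the constant
face sphere is a two-sided identity, and `f̃(i,j) = f(m−i, j)` is a two-sided
inverse for `f`. -/
theorem faceGroup_group {V : Type} [DecidableEq V] (X : ASC V) (x₀ : V) :
    -- closure
    (∀ (m n r s : ℕ) (f g : ℕ × ℕ → V), IsFaceSphere X x₀ m n f →
      IsFaceSphere X x₀ r s g →
      IsFaceSphere X x₀ (m + r + 1) (n + s + 1) (fsMul x₀ m n f g)) ∧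
    -- associativity
    (∀ (m n r s t u : ℕ) (f g h : ℕ × ℕ → V), IsFaceSphere X x₀ m n f →
      IsFaceSphere X x₀ r s g → IsFaceSphere X x₀ t u h →
      ExtContigEquiv X x₀ (m + r + 1 + t + 1) (n + s + 1 + u + 1)
        (fsMul x₀ (m + r + 1) (n + s + 1) (fsMul x₀ m n f g) h)
        (m + (r + t + 1) + 1) (n + (s + u + 1) + 1)
        (fsMul x₀ m n f (fsMul x₀ r s g h))) ∧
    -- the class of the constant face sphere is a two-sided identity
    (∀ (m n : ℕ) (f : ℕ × ℕ → V), IsFaceSphere X x₀ m n f →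
      ExtContigEquiv X x₀ (m + 0 + 1) (n + 0 + 1)
        (fsMul x₀ m n f (fun _ => x₀)) m n f ∧
      ExtContigEquiv X x₀ (0 + m + 1) (0 + n + 1)
        (fsMul x₀ 0 0 (fun _ => x₀) f) m n f) ∧
    -- `f̃` is a face sphere and a two-sided inverse for `f`
    (∀ (m n : ℕ) (f : ℕ × ℕ → V), IsFaceSphere X x₀ m n f →
      IsFaceSphere X x₀ m n (fun p => f (m - p.1, p.2)) ∧
      ExtContigEquiv X x₀ (m + m + 1) (n + n + 1)
        (fsMul x₀ m n f (fun p => f (m - p.1, p.2))) 0 0 (fun _ => x₀) ∧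
      ExtContigEquiv X x₀ (m + m + 1) (n + n + 1)
        (fsMul x₀ m n (fun p => f (m - p.1, p.2)) f) 0 0 (fun _ => x₀)) := by
  refine ⟨?_, ?_, ?_, ?_⟩
  · intro m n r s f g hf hg
    exact closure hf hg
  · intro m n r s t u f g h hf hg hh
    refine ⟨m+r+1+t+1, n+s+1+u+1, le_refl _, by omega, le_refl _, by omega, ?_⟩
    have e1 : m+r+1+t+1 - (m+r+1+t+1) = 0 := by omega
    have e2 : n+s+1+u+1 - (n+s+1+u+1) = 0 := by omega
    have e3 : m+r+1+t+1 - (m+(r+t+1)+1) = 0 := by omega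
    have e4 : n+s+1+u+1 - (n+(s+u+1)+1) = 0 := by omega
    rw [e1, e2, e3, e4, trivExt_zero, trivExt_zero, assoc_eq]
    exact Relation.ReflTransGen.refl
  · intro m n f hf
    constructor
    · refine ⟨m+1, n+1, by omega, by omega, by omega, by omega, ?_⟩
      have e1 : m+1 - (m+0+1) = 0 := by omega
      have e2 : n+1 - (n+0+1) = 0 := by omega
      have e3 : m+1 - m = 1 := by omega
      have e4 : n+1 - n = 1 := by omega
      rw [e1, e2, e3, e4, trivExt_zero]
      exact id_right hf
    · refine ⟨m+1, n+1, by omega, by omega, by omega, by omega, ?_⟩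
      have e1 : m+1 - (0+m+1) = 0 := by omega
      have e2 : n+1 - (0+n+1) = 0 := by omega
      have e3 : m+1 - m = 1 := by omega
      have e4 : n+1 - n = 1 := by omega
      rw [e1, e2, e3, e4, trivExt_zero]
      exact id_left hf
  · intro m n f hf
    refine ⟨tilde_face hf, ?_, ?_⟩
    · refine ⟨m+m+1, n+n+1, le_refl _, by omega, le_refl _, by omega, ?_⟩
      rw [Nat.sub_self, Nat.sub_self, trivExt_zero, Nat.sub_zero, Nat.sub_zero, trivExt_const]
      exact inv_right hf
    · refine ⟨m+m+1, n+n+1, le_refl _, by omega, le_refl _, by omega, ?_⟩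
      rw [Nat.sub_self, Nat.sub_self, trivExt_zero, Nat.sub_zero, Nat.sub_zero, trivExt_const]
      exact inv_left hf
end

section
/- The face group F(X, x₀) of any based simplicial complex (X, x₀) is abelian: for any two face spheres f and g in (X, x₀), the products f·g and g·f are extension-contiguity equivalent. -/
variable {U V W : Type}

def hhp (v a : ℕ) : ℕ → ℕ := fun y => min (y - a) v

def stp (v a j : ℕ) : ℕ → ℕ := fun y => if y ≤ j then min (y - a) v else min (y - a - 1) v

def ProfC (h h' : ℕ → ℕ) : Prop := ∀ y z, y ≤ z + 1 → z ≤ y + 1 → h y ≤ h' z + 1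

def ProfOK (v N : ℕ) (h : ℕ → ℕ) : Prop :=
  (∀ y, h y ≤ v) ∧ h 0 = 0 ∧ h N = v ∧ ProfC h h

lemma hhp_OK {v N a : ℕ} (h : a + v ≤ N) : ProfOK v N (hhp v a) :=
  ⟨fun y => min_le_right _ _, by simp [hhp], by simp only [hhp]; omega,
   fun y z h1 h2 => by simp only [hhp]; omega⟩

lemma stp_OK {v N a j : ℕ} (h : a + v + 1 ≤ N) : ProfOK v N (stp v a j) := by
  refine ⟨fun y => ?_, ?_, ?_, fun y z h1 h2 => ?_⟩ <;>
    simp only [stp] <;> split_ifs <;> omega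

lemma stp_C {v a j j' : ℕ} (h1 : j ≤ j' + 1) (h2 : j' ≤ j + 1) :
    ProfC (stp v a j) (stp v a j') := fun y z hy hz => by
  simp only [stp]; split_ifs <;> omega

lemma stp_low (v a : ℕ) : stp v a a = hhp v (a + 1) := by
  funext y; simp only [stp, hhp]; split_ifs <;> omega

lemma stp_high {v a j : ℕ} (h : a + v ≤ j) : stp v a j = hhp v a := by
  funext y; simp only [stp, hhp]; split_ifs <;> omega

lemma mem_prodInterval_of {M N : ℕ} {σ : Finset (ℕ × ℕ)}
    (h1 : ∀ p ∈ σ, p.1 ≤ M) (h2 : ∀ p ∈ σ, ∀ q ∈ σ, p.1 ≤ q.1 + 1)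
    (h3 : ∀ p ∈ σ, p.2 ≤ N) (h4 : ∀ p ∈ σ, ∀ q ∈ σ, p.2 ≤ q.2 + 1) :
    σ ∈ (prodInterval M N).faces := by
  simp only [prodInterval, ASC.prod, interval, Set.mem_setOf_eq]
  refine ⟨⟨?_, ?_⟩, ?_, ?_⟩
  · intro x hx; obtain ⟨p, hp, rfl⟩ := Finset.mem_image.1 hx; exact h1 p hp
  · intro x hx y hy
    obtain ⟨p, hp, rfl⟩ := Finset.mem_image.1 hx
    obtain ⟨q, hq, rfl⟩ := Finset.mem_image.1 hy
    exact h2 p hp q hq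
  · intro x hx; obtain ⟨p, hp, rfl⟩ := Finset.mem_image.1 hx; exact h3 p hp
  · intro x hx y hy
    obtain ⟨p, hp, rfl⟩ := Finset.mem_image.1 hx
    obtain ⟨q, hq, rfl⟩ := Finset.mem_image.1 hy
    exact h4 p hp q hq

lemma prodInterval_bounds {M N : ℕ} {σ : Finset (ℕ × ℕ)}
    (hσ : σ ∈ (prodInterval M N).faces) :
    (∀ p ∈ σ, p.1 ≤ M ∧ p.2 ≤ N) ∧
      (∀ p ∈ σ, ∀ q ∈ σ, p.1 ≤ q.1 + 1 ∧ p.2 ≤ q.2 + 1) := by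
  simp only [prodInterval, ASC.prod, interval, Set.mem_setOf_eq] at hσ
  obtain ⟨⟨a1, a2⟩, b1, b2⟩ := hσ
  exact ⟨fun p hp => ⟨a1 _ (Finset.mem_image_of_mem _ hp), b1 _ (Finset.mem_image_of_mem _ hp)⟩,
    fun p hp q hq => ⟨a2 _ (Finset.mem_image_of_mem _ hp) _ (Finset.mem_image_of_mem _ hq),
      b2 _ (Finset.mem_image_of_mem _ hp) _ (Finset.mem_image_of_mem _ hq)⟩⟩

lemma singleton_x0 [DecidableEq V] {X : ASC V} {x₀ : V} {m n : ℕ} {f : ℕ × ℕ → V}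
    (hf : IsFaceSphere X x₀ m n f) : {x₀} ∈ X.faces := by
  have hσ : ({((0 : ℕ), (0 : ℕ))} : Finset (ℕ × ℕ)) ∈ (prodInterval m n).faces :=
    mem_prodInterval_of (by simp) (by simp) (by simp) (by simp)
  have h2 := hf.1 _ hσ
  have e : ({((0 : ℕ), (0 : ℕ))} : Finset (ℕ × ℕ)).image f = {x₀} := by
    rw [Finset.image_singleton, hf.2 (0, 0) (by simp) (by simp) (Or.inl rfl)]
  rwa [e] at h2

def Cc [DecidableEq V] (m : ℕ) (f g : ℕ × ℕ → V) (h1 h2 : ℕ → ℕ) : ℕ × ℕ → V :=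
  fun p => if p.1 ≤ m then f (p.1, h1 p.2) else g (p.1 - (m + 1), h2 p.2)

lemma Cc_boundary [DecidableEq V] {X : ASC V} {x₀ : V} {m n r s N : ℕ} {f g : ℕ × ℕ → V}
    (hf : IsFaceSphere X x₀ m n f) (hg : IsFaceSphere X x₀ r s g)
    {h1 h2 : ℕ → ℕ} (H1 : ProfOK n N h1) (H2 : ProfOK s N h2) :
    ∀ p : ℕ × ℕ, p.1 ≤ m + r + 1 → p.2 ≤ N →
      (p.1 = 0 ∨ p.1 = m + r + 1 ∨ p.2 = 0 ∨ p.2 = N) → Cc m f g h1 h2 p = x₀ := by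
  rintro ⟨x, y⟩ hx hy hb
  simp only [Cc]
  split_ifs with hxm
  · apply hf.2 (x, h1 y) hxm (H1.1 y)
    rcases hb with h | h | h | h
    · exact Or.inl h
    · exact Or.inr (Or.inl (by omega))
    · exact Or.inr (Or.inr (Or.inl (by simp only at h; rw [h]; exact H1.2.1)))
    · exact Or.inr (Or.inr (Or.inr (by simp only at h; rw [h]; exact H1.2.2.1)))
  · apply hg.2 (x - (m + 1), h2 y) (by omega) (H2.1 y)
    rcases hb with h | h | h | h
    · exact Or.inl (by omega)
    · exact Or.inr (Or.inl (by omega))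
    · exact Or.inr (Or.inr (Or.inl (by simp only at h; rw [h]; exact H2.2.1)))
    · exact Or.inr (Or.inr (Or.inr (by simp only at h; rw [h]; exact H2.2.2.1)))

lemma Cc_contig [DecidableEq V] {X : ASC V} {x₀ : V} {m n r s N : ℕ} {f g : ℕ × ℕ → V}
    (hf : IsFaceSphere X x₀ m n f) (hg : IsFaceSphere X x₀ r s g)
    {h1 h1' h2 h2' : ℕ → ℕ}
    (H1 : ProfOK n N h1) (H1' : ProfOK n N h1') (H2 : ProfOK s N h2) (H2' : ProfOK s N h2')
    (C1 : ProfC h1 h1') (C1' : ProfC h1' h1) (C2 : ProfC h2 h2') (C2' : ProfC h2' h2) :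
    Contiguous (prodInterval (m + r + 1) N) X (Cc m f g h1 h2) (Cc m f g h1' h2') := by
  intro σ hσ
  obtain ⟨hbd, hcl⟩ := prodInterval_bounds hσ
  by_cases hA : ∀ p ∈ σ, p.1 ≤ m
  · have e : ∀ k k2 : ℕ → ℕ, σ.image (Cc m f g k k2) =
        (σ.image (fun p : ℕ × ℕ => (p.1, k p.2))).image f := by
      intro k k2
      rw [Finset.image_image]
      refine Finset.image_congr fun p hp => ?_
      simp only [Cc, Function.comp_apply, if_pos (hA p hp)]
    rw [e h1 h2, e h1' h2', ← Finset.image_union]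
    have hmem : ∀ q ∈ σ.image (fun p : ℕ × ℕ => (p.1, h1 p.2)) ∪
        σ.image (fun p : ℕ × ℕ => (p.1, h1' p.2)),
        ∃ a ∈ σ, q.1 = a.1 ∧ (q.2 = h1 a.2 ∨ q.2 = h1' a.2) := by
      intro q hq
      rcases Finset.mem_union.1 hq with h | h <;> obtain ⟨a, ha, rfl⟩ := Finset.mem_image.1 h
      · exact ⟨a, ha, rfl, Or.inl rfl⟩
      · exact ⟨a, ha, rfl, Or.inr rfl⟩
    refine hf.1 _ (mem_prodInterval_of ?_ ?_ ?_ ?_)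
    · intro p hp; obtain ⟨a, ha, e1, _⟩ := hmem p hp; rw [e1]; exact hA a ha
    · intro p hp q hq
      obtain ⟨a, ha, e1, _⟩ := hmem p hp; obtain ⟨b, hb, e2, _⟩ := hmem q hq
      rw [e1, e2]; exact (hcl a ha b hb).1
    · intro p hp; obtain ⟨a, ha, _, e2⟩ := hmem p hp
      rcases e2 with e2 | e2 <;> rw [e2]
      · exact H1.1 _
      · exact H1'.1 _
    · intro p hp q hq
      obtain ⟨a, ha, _, e2⟩ := hmem p hp; obtain ⟨b, hb, _, e3⟩ := hmem q hq
      have c1 := (hcl a ha b hb).2; have c2 := (hcl b hb a ha).2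
      rcases e2 with e2 | e2 <;> rcases e3 with e3 | e3 <;> rw [e2, e3]
      · exact H1.2.2.2 _ _ c1 c2
      · exact C1 _ _ c1 c2
      · exact C1' _ _ c1 c2
      · exact H1'.2.2.2 _ _ c1 c2
  · by_cases hB : ∀ p ∈ σ, m + 1 ≤ p.1
    · have e : ∀ k k2 : ℕ → ℕ, σ.image (Cc m f g k k2) =
          (σ.image (fun p : ℕ × ℕ => (p.1 - (m + 1), k2 p.2))).image g := by
        intro k k2
        rw [Finset.image_image]
        refine Finset.image_congr fun p hp => ?_
        simp only [Cc, Function.comp_apply, if_neg (show ¬p.1 ≤ m by have := hB p hp; omega)]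
      rw [e h1 h2, e h1' h2', ← Finset.image_union]
      have hmem : ∀ q ∈ σ.image (fun p : ℕ × ℕ => (p.1 - (m + 1), h2 p.2)) ∪
          σ.image (fun p : ℕ × ℕ => (p.1 - (m + 1), h2' p.2)),
          ∃ a ∈ σ, q.1 = a.1 - (m + 1) ∧ (q.2 = h2 a.2 ∨ q.2 = h2' a.2) := by
        intro q hq
        rcases Finset.mem_union.1 hq with h | h <;> obtain ⟨a, ha, rfl⟩ := Finset.mem_image.1 h
        · exact ⟨a, ha, rfl, Or.inl rfl⟩
        · exact ⟨a, ha, rfl, Or.inr rfl⟩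
      refine hg.1 _ (mem_prodInterval_of ?_ ?_ ?_ ?_)
      · intro p hp; obtain ⟨a, ha, e1, _⟩ := hmem p hp
        have := (hbd a ha).1; rw [e1]; omega
      · intro p hp q hq
        obtain ⟨a, ha, e1, _⟩ := hmem p hp; obtain ⟨b, hb, e2, _⟩ := hmem q hq
        have := (hcl a ha b hb).1; rw [e1, e2]; omega
      · intro p hp; obtain ⟨a, ha, _, e2⟩ := hmem p hp
        rcases e2 with e2 | e2 <;> rw [e2]
        · exact H2.1 _
        · exact H2'.1 _
      · intro p hp q hq
        obtain ⟨a, ha, _, e2⟩ := hmem p hp; obtain ⟨b, hb, _, e3⟩ := hmem q hq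
        have c1 := (hcl a ha b hb).2; have c2 := (hcl b hb a ha).2
        rcases e2 with e2 | e2 <;> rcases e3 with e3 | e3 <;> rw [e2, e3]
        · exact H2.2.2.2 _ _ c1 c2
        · exact C2 _ _ c1 c2
        · exact C2' _ _ c1 c2
        · exact H2'.2.2.2 _ _ c1 c2
    · push_neg at hA hB
      obtain ⟨p₀, hp₀, hp₀m⟩ := hA
      obtain ⟨q₀, hq₀, hq₀m⟩ := hB
      have hval : ∀ k k2 : ℕ → ℕ, (∀ y, k y ≤ n) → (∀ y, k2 y ≤ s) →
          ∀ p ∈ σ, Cc m f g k k2 p = x₀ := by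
        intro k k2 hk hk2 p hp
        simp only [Cc]; split_ifs with hpm
        · have hm : p.1 = m := by have := (hcl p₀ hp₀ p hp).1; omega
          exact hf.2 (p.1, k p.2) hpm (hk _) (Or.inr (Or.inl hm))
        · have e0 : p.1 - (m + 1) = 0 := by have := (hcl p hp q₀ hq₀).1; omega
          rw [e0]
          exact hg.2 (0, k2 p.2) (Nat.zero_le _) (hk2 _) (Or.inl rfl)
      apply X.down_closed (singleton_x0 hf)
      intro x hx
      rcases Finset.mem_union.1 hx with h | h <;> obtain ⟨p, hp, rfl⟩ := Finset.mem_image.1 h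
      · rw [hval h1 h2 H1.1 H2.1 p hp]; exact Finset.mem_singleton_self _
      · rw [hval h1' h2' H1'.1 H2'.1 p hp]; exact Finset.mem_singleton_self _

lemma Cc_faceSphere [DecidableEq V] {X : ASC V} {x₀ : V} {m n r s N : ℕ} {f g : ℕ × ℕ → V}
    (hf : IsFaceSphere X x₀ m n f) (hg : IsFaceSphere X x₀ r s g)
    {h1 h2 : ℕ → ℕ} (H1 : ProfOK n N h1) (H2 : ProfOK s N h2) :
    IsFaceSphere X x₀ (m + r + 1) N (Cc m f g h1 h2) := by
  refine ⟨fun σ hσ => ?_, Cc_boundary hf hg H1 H2⟩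
  have := Cc_contig hf hg H1 H1 H2 H2 H1.2.2.2 H1.2.2.2 H2.2.2.2 H2.2.2.2 σ hσ
  simpa [Finset.union_self] using this

lemma Cc_step [DecidableEq V] {X : ASC V} {x₀ : V} {m n r s N : ℕ} {f g : ℕ × ℕ → V}
    (hf : IsFaceSphere X x₀ m n f) (hg : IsFaceSphere X x₀ r s g)
    {h1 h1' h2 h2' : ℕ → ℕ}
    (H1 : ProfOK n N h1) (H1' : ProfOK n N h1') (H2 : ProfOK s N h2) (H2' : ProfOK s N h2')
    (C1 : ProfC h1 h1') (C1' : ProfC h1' h1) (C2 : ProfC h2 h2') (C2' : ProfC h2' h2) :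
    FaceContigEquiv X x₀ (m + r + 1) N (Cc m f g h1 h2) (Cc m f g h1' h2') :=
  Relation.ReflTransGen.single
    ⟨Cc_faceSphere hf hg H1 H2, Cc_faceSphere hf hg H1' H2',
      Cc_contig hf hg H1 H1' H2 H2' C1 C1' C2 C2'⟩

lemma FCE_symm [DecidableEq V] {X : ASC V} {x₀ : V} {M N : ℕ} {a b : ℕ × ℕ → V}
    (h : FaceContigEquiv X x₀ M N a b) : FaceContigEquiv X x₀ M N b a :=
  letI : Std.Symm (fun a b : ℕ × ℕ → V => IsFaceSphere X x₀ M N a ∧ IsFaceSphere X x₀ M N b ∧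
      Contiguous (prodInterval M N) X a b) := ⟨
    (fun _u _w h => ⟨h.2.1, h.1, fun σ hσ => by
      rw [Finset.union_comm]; exact h.2.2 σ hσ⟩)⟩
  (Relation.ReflTransGen.stdSymm (r := fun a b : ℕ × ℕ → V => IsFaceSphere X x₀ M N a ∧
      IsFaceSphere X x₀ M N b ∧ Contiguous (prodInterval M N) X a b)).symm _ _ h

lemma slot1_one [DecidableEq V] {X : ASC V} {x₀ : V} {m n r s N : ℕ} {f g : ℕ × ℕ → V}
    (hf : IsFaceSphere X x₀ m n f) (hg : IsFaceSphere X x₀ r s g)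
    {h2 : ℕ → ℕ} (H2 : ProfOK s N h2) (b : ℕ) (hb : b + n + 1 ≤ N) :
    FaceContigEquiv X x₀ (m + r + 1) N (Cc m f g (hhp n (b + 1)) h2)
      (Cc m f g (hhp n b) h2) := by
  have key : ∀ k : ℕ, FaceContigEquiv X x₀ (m + r + 1) N (Cc m f g (stp n b b) h2)
      (Cc m f g (stp n b (b + k)) h2) := by
    intro k
    induction k with
    | zero => exact Relation.ReflTransGen.refl
    | succ k ih =>
        exact ih.trans (Cc_step hf hg (stp_OK hb) (stp_OK hb) H2 H2
          (stp_C (by omega) (by omega)) (stp_C (by omega) (by omega))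
          H2.2.2.2 H2.2.2.2)
  have h := key n
  rwa [stp_low, stp_high (le_refl _)] at h

lemma slot1_chain [DecidableEq V] {X : ASC V} {x₀ : V} {m n r s N : ℕ} {f g : ℕ × ℕ → V}
    (hf : IsFaceSphere X x₀ m n f) (hg : IsFaceSphere X x₀ r s g)
    {h2 : ℕ → ℕ} (H2 : ProfOK s N h2) (a b : ℕ) (hba : b ≤ a) (ha : a + n ≤ N) :
    FaceContigEquiv X x₀ (m + r + 1) N (Cc m f g (hhp n a) h2) (Cc m f g (hhp n b) h2) := by
  have key : ∀ k b : ℕ, b + k + n ≤ N →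
      FaceContigEquiv X x₀ (m + r + 1) N (Cc m f g (hhp n (b + k)) h2)
        (Cc m f g (hhp n b) h2) := by
    intro k
    induction k with
    | zero => intro b _; exact Relation.ReflTransGen.refl
    | succ k ih =>
        intro b h
        have step : FaceContigEquiv X x₀ (m + r + 1) N (Cc m f g (hhp n (b + k + 1)) h2)
            (Cc m f g (hhp n (b + k)) h2) := slot1_one hf hg H2 (b + k) (by omega)
        exact step.trans (ih b (by omega))
  obtain ⟨k, rfl⟩ := Nat.exists_eq_add_of_le hba
  exact key k b (by omega)

lemma slot2_one [DecidableEq V] {X : ASC V} {x₀ : V} {m n r s N : ℕ} {f g : ℕ × ℕ → V}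
    (hf : IsFaceSphere X x₀ m n f) (hg : IsFaceSphere X x₀ r s g)
    {h1 : ℕ → ℕ} (H1 : ProfOK n N h1) (b : ℕ) (hb : b + s + 1 ≤ N) :
    FaceContigEquiv X x₀ (m + r + 1) N (Cc m f g h1 (hhp s (b + 1)))
      (Cc m f g h1 (hhp s b)) := by
  have key : ∀ k : ℕ, FaceContigEquiv X x₀ (m + r + 1) N (Cc m f g h1 (stp s b b))
      (Cc m f g h1 (stp s b (b + k))) := by
    intro k
    induction k with
    | zero => exact Relation.ReflTransGen.refl
    | succ k ih =>
        exact ih.trans (Cc_step hf hg H1 H1 (stp_OK hb) (stp_OK hb)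
          H1.2.2.2 H1.2.2.2
          (stp_C (by omega) (by omega)) (stp_C (by omega) (by omega)))
  have h := key s
  rwa [stp_low, stp_high (le_refl _)] at h

lemma slot2_chain [DecidableEq V] {X : ASC V} {x₀ : V} {m n r s N : ℕ} {f g : ℕ × ℕ → V}
    (hf : IsFaceSphere X x₀ m n f) (hg : IsFaceSphere X x₀ r s g)
    {h1 : ℕ → ℕ} (H1 : ProfOK n N h1) (a b : ℕ) (hba : b ≤ a) (ha : a + s ≤ N) :
    FaceContigEquiv X x₀ (m + r + 1) N (Cc m f g h1 (hhp s a)) (Cc m f g h1 (hhp s b)) := by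
  have key : ∀ k b : ℕ, b + k + s ≤ N →
      FaceContigEquiv X x₀ (m + r + 1) N (Cc m f g h1 (hhp s (b + k)))
        (Cc m f g h1 (hhp s b)) := by
    intro k
    induction k with
    | zero => intro b _; exact Relation.ReflTransGen.refl
    | succ k ih =>
        intro b h
        have step := slot2_one hf hg H1 (b + k) (show b + k + s + 1 ≤ N by omega)
        exact step.trans (ih b (by omega))
  obtain ⟨k, rfl⟩ := Nat.exists_eq_add_of_le hba
  exact key k b (by omega)

lemma hop [DecidableEq V] {X : ASC V} {x₀ : V} {M N : ℕ} {A B : ℕ × ℕ → V}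
    (hA : IsFaceSphere X x₀ M N A)
    (hAB : ∀ p : ℕ × ℕ, p.1 ≤ M → p.2 ≤ N → A p = B p) :
    IsFaceSphere X x₀ M N B ∧ FaceContigEquiv X x₀ M N A B := by
  have himg : ∀ σ ∈ (prodInterval M N).faces, σ.image A = σ.image B := by
    intro σ hσ
    refine Finset.image_congr fun p hp => ?_
    have h := (prodInterval_bounds hσ).1 p hp
    exact hAB p h.1 h.2
  have hB : IsFaceSphere X x₀ M N B :=
    ⟨fun σ hσ => by rw [← himg σ hσ]; exact hA.1 σ hσ,
     fun p h1 h2 h3 => by rw [← hAB p h1 h2]; exact hA.2 p h1 h2 h3⟩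
  exact ⟨hB, Relation.ReflTransGen.single ⟨hA, hB, fun σ hσ => by
    rw [himg σ hσ, Finset.union_self]; exact hB.1 σ hσ⟩⟩

lemma swap_mem_prodInterval {M N : ℕ} {σ : Finset (ℕ × ℕ)}
    (hσ : σ ∈ (prodInterval M N).faces) :
    σ.image Prod.swap ∈ (prodInterval N M).faces := by
  obtain ⟨hbd, hcl⟩ := prodInterval_bounds hσ
  refine mem_prodInterval_of ?_ ?_ ?_ ?_
  · intro p hp; obtain ⟨a, ha, rfl⟩ := Finset.mem_image.1 hp; exact (hbd a ha).2
  · intro p hp q hq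
    obtain ⟨a, ha, rfl⟩ := Finset.mem_image.1 hp
    obtain ⟨b, hb, rfl⟩ := Finset.mem_image.1 hq
    exact (hcl a ha b hb).2
  · intro p hp; obtain ⟨a, ha, rfl⟩ := Finset.mem_image.1 hp; exact (hbd a ha).1
  · intro p hp q hq
    obtain ⟨a, ha, rfl⟩ := Finset.mem_image.1 hp
    obtain ⟨b, hb, rfl⟩ := Finset.mem_image.1 hq
    exact (hcl a ha b hb).1

lemma IsFaceSphere_swap [DecidableEq V] {X : ASC V} {x₀ : V} {M N : ℕ} {a : ℕ × ℕ → V}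
    (h : IsFaceSphere X x₀ M N a) : IsFaceSphere X x₀ N M (a ∘ Prod.swap) := by
  refine ⟨fun σ hσ => ?_, fun p h1 h2 h3 => ?_⟩
  · rw [show σ.image (a ∘ Prod.swap) = (σ.image Prod.swap).image a from
      (Finset.image_image).symm]
    exact h.1 _ (swap_mem_prodInterval hσ)
  · exact h.2 (p.2, p.1) h2 h1 (by tauto)

lemma FCE_swap [DecidableEq V] {X : ASC V} {x₀ : V} {M N : ℕ} {a b : ℕ × ℕ → V}
    (h : FaceContigEquiv X x₀ M N a b) :
    FaceContigEquiv X x₀ N M (a ∘ Prod.swap) (b ∘ Prod.swap) := by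
  refine Relation.ReflTransGen.lift (fun c => c ∘ Prod.swap) ?_ _ _ h
  rintro u w ⟨hu, hw, huw⟩
  change _ ∧ _ ∧ _
  refine ⟨IsFaceSphere_swap hu, IsFaceSphere_swap hw, fun σ hσ => ?_⟩
  rw [show σ.image (u ∘ Prod.swap) = (σ.image Prod.swap).image u from (Finset.image_image).symm,
      show σ.image (w ∘ Prod.swap) = (σ.image Prod.swap).image w from (Finset.image_image).symm]
  exact huw _ (swap_mem_prodInterval hσ)

/-- the face group is abelian: `f·g ≈ g·f`. -/
theorem faceGroup_comm {V : Type} [DecidableEq V] (X : ASC V) (x₀ : V)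
    (m n r s : ℕ) (f g : ℕ × ℕ → V)
    (hf : IsFaceSphere X x₀ m n f) (hg : IsFaceSphere X x₀ r s g) :
    ExtContigEquiv X x₀ (m + r + 1) (n + s + 1) (fsMul x₀ m n f g)
      (r + m + 1) (s + n + 1) (fsMul x₀ r s g f) := by
  refine ⟨m + r + 1, n + s + 1, le_refl _, by omega, le_refl _, by omega, ?_⟩
  rw [show m + r + 1 - (m + r + 1) = 0 by omega, show n + s + 1 - (n + s + 1) = 0 by omega,
      show m + r + 1 - (r + m + 1) = 0 by omega, show n + s + 1 - (s + n + 1) = 0 by omega]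
  have etriv : ∀ (a b : ℕ) (F : ℕ × ℕ → V), trivExt a b 0 0 F = F := fun a b F => rfl
  rw [etriv, etriv]
  -- profiles
  have P_n0 : ProfOK n (n + s + 1) (hhp n 0) := hhp_OK (by omega)
  have P_ns1 : ProfOK n (n + s + 1) (hhp n (s + 1)) := hhp_OK (by omega)
  have P_s0 : ProfOK s (n + s + 1) (hhp s 0) := hhp_OK (by omega)
  have P_sn1 : ProfOK s (n + s + 1) (hhp s (n + 1)) := hhp_OK (by omega)
  have Q_r0 : ProfOK r (m + r + 1) (hhp r 0) := hhp_OK (by omega)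
  have Q_rm1 : ProfOK r (m + r + 1) (hhp r (m + 1)) := hhp_OK (by omega)
  have Q_m0 : ProfOK m (m + r + 1) (hhp m 0) := hhp_OK (by omega)
  have Q_mr1 : ProfOK m (m + r + 1) (hhp m (r + 1)) := hhp_OK (by omega)
  have hfs : IsFaceSphere X x₀ n m (f ∘ Prod.swap) := IsFaceSphere_swap hf
  have hgs : IsFaceSphere X x₀ s r (g ∘ Prod.swap) := IsFaceSphere_swap hg
  -- agreement 1
  have agree1 : ∀ p : ℕ × ℕ, p.1 ≤ m + r + 1 → p.2 ≤ n + s + 1 →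
      Cc m f g (hhp n 0) (hhp s (n + 1)) p = fsMul x₀ m n f g p := by
    intro p hx hy
    simp only [Cc, fsMul, hhp]
    by_cases c1 : p.1 ≤ m
    · by_cases c2 : p.2 ≤ n
      · rw [if_pos c1, if_pos ⟨c1, c2⟩, show min (p.2 - 0) n = p.2 by omega]
      · rw [if_pos c1, if_neg (show ¬(p.1 ≤ m ∧ p.2 ≤ n) by tauto),
            if_neg (show ¬(m + 1 ≤ p.1 ∧ n + 1 ≤ p.2) by omega),
            show min (p.2 - 0) n = n by omega]
        exact hf.2 (p.1, n) c1 le_rfl (Or.inr (Or.inr (Or.inr rfl)))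
    · by_cases c2 : n + 1 ≤ p.2
      · rw [if_neg c1, if_neg (show ¬(p.1 ≤ m ∧ p.2 ≤ n) by tauto),
            if_pos (show m + 1 ≤ p.1 ∧ n + 1 ≤ p.2 by omega),
            show min (p.2 - (n + 1)) s = p.2 - (n + 1) by omega]
      · rw [if_neg c1, if_neg (show ¬(p.1 ≤ m ∧ p.2 ≤ n) by tauto),
            if_neg (show ¬(m + 1 ≤ p.1 ∧ n + 1 ≤ p.2) by tauto),
            show min (p.2 - (n + 1)) s = 0 by omega]
        exact hg.2 (p.1 - (m + 1), 0) (by omega) (Nat.zero_le _) (Or.inr (Or.inr (Or.inl rfl)))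
  -- agreement 2
  have agree2 : ∀ p : ℕ × ℕ, p.1 ≤ m + r + 1 → p.2 ≤ n + s + 1 →
      Cc m f g (hhp n (s + 1)) (hhp s 0) p =
        (Cc s (g ∘ Prod.swap) (f ∘ Prod.swap) (hhp r (m + 1)) (hhp m 0)) (Prod.swap p) := by
    intro p hx hy
    simp only [Cc, hhp, Function.comp_apply, Prod.fst_swap, Prod.snd_swap, Prod.swap_prod_mk]
    by_cases c1 : p.1 ≤ m
    · by_cases c2 : p.2 ≤ s
      · rw [if_pos c1, if_pos c2, show min (p.2 - (s + 1)) n = 0 by omega,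
            show min (p.1 - (m + 1)) r = 0 by omega,
            hf.2 (p.1, 0) c1 (Nat.zero_le _) (Or.inr (Or.inr (Or.inl rfl)))]
        exact (hg.2 (0, p.2) (Nat.zero_le _) c2 (Or.inl rfl)).symm
      · rw [if_pos c1, if_neg c2, show min (p.2 - (s + 1)) n = p.2 - (s + 1) by omega,
            show min (p.1 - 0) m = p.1 by omega]
    · by_cases c2 : p.2 ≤ s
      · rw [if_neg c1, if_pos c2, show min (p.2 - 0) s = p.2 by omega,
            show min (p.1 - (m + 1)) r = p.1 - (m + 1) by omega]
      · rw [if_neg c1, if_neg c2, show min (p.2 - 0) s = s by omega,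
            show min (p.1 - 0) m = m by omega,
            hg.2 (p.1 - (m + 1), s) (by omega) le_rfl (Or.inr (Or.inr (Or.inr rfl)))]
        exact (hf.2 (m, p.2 - (s + 1)) le_rfl (by omega) (Or.inr (Or.inl rfl))).symm
  -- agreement 3
  have agree3 : ∀ p : ℕ × ℕ, p.1 ≤ m + r + 1 → p.2 ≤ n + s + 1 →
      (Cc s (g ∘ Prod.swap) (f ∘ Prod.swap) (hhp r 0) (hhp m (r + 1))) (Prod.swap p) =
        fsMul x₀ r s g f p := by
    intro p hx hy
    simp only [Cc, fsMul, hhp, Function.comp_apply, Prod.fst_swap, Prod.snd_swap,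
      Prod.swap_prod_mk]
    by_cases c2 : p.2 ≤ s
    · by_cases c1 : p.1 ≤ r
      · rw [if_pos c2, if_pos ⟨c1, c2⟩, show min (p.1 - 0) r = p.1 by omega]
      · rw [if_pos c2, if_neg (show ¬(p.1 ≤ r ∧ p.2 ≤ s) by tauto),
            if_neg (show ¬(r + 1 ≤ p.1 ∧ s + 1 ≤ p.2) by omega),
            show min (p.1 - 0) r = r by omega]
        exact hg.2 (r, p.2) le_rfl c2 (Or.inr (Or.inl rfl))
    · by_cases c1 : r + 1 ≤ p.1
      · rw [if_neg c2, if_neg (show ¬(p.1 ≤ r ∧ p.2 ≤ s) by tauto),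
            if_pos (show r + 1 ≤ p.1 ∧ s + 1 ≤ p.2 by omega),
            show min (p.1 - (r + 1)) m = p.1 - (r + 1) by omega]
      · rw [if_neg c2, if_neg (show ¬(p.1 ≤ r ∧ p.2 ≤ s) by tauto),
            if_neg (show ¬(r + 1 ≤ p.1 ∧ s + 1 ≤ p.2) by tauto),
            show min (p.1 - (r + 1)) m = 0 by omega]
        exact hf.2 (0, p.2 - (s + 1)) (Nat.zero_le _) (by omega) (Or.inl rfl)
  -- hops and chains
  have hop1 := hop (Cc_faceSphere hf hg P_n0 P_sn1) agree1
  have step1 := slot2_chain hf hg P_n0 (n + 1) 0 (by omega) (by omega)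
  have step2 := FCE_symm (slot1_chain hf hg P_s0 (s + 1) 0 (by omega) (by omega))
  have hop2 := hop (Cc_faceSphere hf hg P_ns1 P_s0) agree2
  have step3 := slot1_chain hgs hfs Q_m0 (m + 1) 0 (by omega) (by omega)
  have step4 := FCE_symm (slot2_chain hgs hfs Q_r0 (r + 1) 0 (by omega) (by omega))
  have hswap := FCE_swap (step3.trans step4)
  rw [show s + n + 1 = n + s + 1 by omega] at hswap
  have hB2 : IsFaceSphere X x₀ (m + r + 1) (n + s + 1)
      ((Cc s (g ∘ Prod.swap) (f ∘ Prod.swap) (hhp r 0) (hhp m (r + 1))) ∘ Prod.swap) := by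
    have h := IsFaceSphere_swap (Cc_faceSphere hgs hfs Q_r0 Q_mr1)
    rwa [show s + n + 1 = n + s + 1 by omega] at h
  have hop3 := hop hB2 agree3
  exact (FCE_symm hop1.2).trans (step1.trans (step2.trans (hop2.2.trans
    (hswap.trans hop3.2))))
end

section
/- A based simplicial map φ : (X, x₀) → (Y, y₀) induces a group homomorphism φ_# : F(X, x₀) → F(Y, y₀) by φ_#([f]) = [φ∘f]; this assignment is functorial (id_# is the identity and (ψ∘φ)_# = ψ_# ∘ φ_#), and contiguity equivalent based simplicial maps induce equal homomorphisms. -/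
variable {U V W : Type}

section Aux
variable {V W : Type} [DecidableEq V] [DecidableEq W]

theorem comp_isFaceSphere (X : ASC V) (Y : ASC W) (x₀ : V) (y₀ : W)
    (φ : V → W) (hφ : IsSimplicialMap X Y φ) (hb : φ x₀ = y₀)
    (m n : ℕ) (f : ℕ × ℕ → V) (hf : IsFaceSphere X x₀ m n f) :
    IsFaceSphere Y y₀ m n (φ ∘ f) := by
  constructor
  · intro s hs
    have := hφ _ (hf.1 s hs)
    simpa [Finset.image_image] using this
  · intro p h1 h2 h3
    simp [Function.comp, hf.2 p h1 h2 h3, hb]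

theorem comp_contig (X : ASC V) (Y : ASC W)
    (φ ψ : V → W) (hc : Contiguous X Y φ ψ)
    {K : ASC (ℕ × ℕ)} (f : ℕ × ℕ → V) (hf : IsSimplicialMap K X f) :
    Contiguous K Y (φ ∘ f) (ψ ∘ f) := by
  intro s hs
  have := hc _ (hf s hs)
  simpa [Finset.image_image] using this

theorem comp_faceContig (X : ASC V) (Y : ASC W) (x₀ : V) (y₀ : W)
    (φ : V → W) (hφ : IsSimplicialMap X Y φ) (hb : φ x₀ = y₀)
    (m n : ℕ) (f g : ℕ × ℕ → V) (h : FaceContigEquiv X x₀ m n f g) :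
    FaceContigEquiv Y y₀ m n (φ ∘ f) (φ ∘ g) := by
  induction h with
  | refl => exact Relation.ReflTransGen.refl
  | tail _ hbc ih =>
    exact ih.tail ⟨comp_isFaceSphere X Y x₀ y₀ φ hφ hb m n _ hbc.1,
      comp_isFaceSphere X Y x₀ y₀ φ hφ hb m n _ hbc.2.1,
      fun s hs => by simpa [Finset.image_image, Finset.image_union] using hφ _ (hbc.2.2 s hs)⟩

omit [DecidableEq V] in
theorem trivExt_zero (m n : ℕ) (f : ℕ × ℕ → V) : trivExt m n 0 0 f = f := by
  funext p
  simp [trivExt]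

end Aux

/-- a based simplicial map `φ` induces a homomorphism of face
groups `φ_#([f]) = [φ ∘ f]`; the assignment is functorial, and contiguity
equivalent based simplicial maps induce equal homomorphisms. -/
theorem induced_hom_functorial {V W : Type} [DecidableEq V] [DecidableEq W]
    (X : ASC V) (Y : ASC W) (x₀ : V) (y₀ : W)
    (φ : V → W) (hφ : IsSimplicialMap X Y φ) (hb : φ x₀ = y₀) :
    -- composition with φ sends face spheres to face spheres
    (∀ (m n : ℕ) (f : ℕ × ℕ → V), IsFaceSphere X x₀ m n f →
      IsFaceSphere Y y₀ m n (φ ∘ f)) ∧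
    -- φ_# is well defined on extension-contiguity classes
    (∀ (m n m' n' : ℕ) (f g : ℕ × ℕ → V), ExtContigEquiv X x₀ m n f m' n' g →
      ExtContigEquiv Y y₀ m n (φ ∘ f) m' n' (φ ∘ g)) ∧
    -- φ_# is multiplicative
    (∀ (m n : ℕ) (f g : ℕ × ℕ → V),
      φ ∘ fsMul x₀ m n f g = fsMul y₀ m n (φ ∘ f) (φ ∘ g)) ∧
    -- functoriality: identity
    (∀ f : ℕ × ℕ → V, (id : V → V) ∘ f = f) ∧
    -- functoriality: composition
    (∀ (Z : Type) (ψ : W → Z) (f : ℕ × ℕ → V), (ψ ∘ φ) ∘ f = ψ ∘ (φ ∘ f)) ∧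
    -- contiguity equivalent based maps induce equal homomorphisms
    (∀ ψ : V → W, ψ x₀ = y₀ →
      Relation.ReflTransGen (fun a b =>
        (IsSimplicialMap X Y a ∧ a x₀ = y₀) ∧ (IsSimplicialMap X Y b ∧ b x₀ = y₀) ∧
          Contiguous X Y a b) φ ψ →
      ∀ (m n : ℕ) (f : ℕ × ℕ → V), IsFaceSphere X x₀ m n f →
        ExtContigEquiv Y y₀ m n (φ ∘ f) m n (ψ ∘ f)) := by
  refine ⟨comp_isFaceSphere X Y x₀ y₀ φ hφ hb, ?_, ?_, ?_, ?_, ?_⟩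
  · rintro m n m' n' f g ⟨M, N, h1, h2, h3, h4, h5⟩
    exact ⟨M, N, h1, h2, h3, h4, comp_faceContig X Y x₀ y₀ φ hφ hb _ _ _ _ h5⟩
  · intro m n f g
    funext p
    by_cases h1 : p.1 ≤ m ∧ p.2 ≤ n
    · simp [fsMul, h1]
    · by_cases h2 : m + 1 ≤ p.1 ∧ n + 1 ≤ p.2
      · simp [fsMul, h1, h2]
      · simp [fsMul, h1, hb, show ¬(m < p.1 ∧ n < p.2) from h2]
  · intro f; rfl
  · intro Z ψ f; rfl
  · intro ψ hψb hchain m n f hf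
    refine ⟨m, n, le_refl m, le_refl m, le_refl n, le_refl n, ?_⟩
    simp only [Nat.sub_self, trivExt_zero]
    clear hb hφ
    induction hchain with
    | refl => exact Relation.ReflTransGen.refl
    | tail _ hbc ih =>
      exact (ih hbc.1.2).tail ⟨comp_isFaceSphere X Y x₀ y₀ _ hbc.1.1 hbc.1.2 m n f hf,
        comp_isFaceSphere X Y x₀ y₀ _ hbc.2.1.1 hbc.2.1.2 m n f hf,
        comp_contig X Y _ _ hbc.2.2 f hf.1⟩
end
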